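/- There exists an absolute constant C > 0 with the following property. Let d ≥ 2 and m ≥ 3 be integers, let θ, θ′ ∈ ℝ and ε ≥ 0, fix a unit vector u ∈ S^{d−1}, and let x₁, …, x_m be independent random vectors, each distributed according to σ_d. Set p := (σ_d ⊗ σ_d)({(x, y) : |⟨x, y⟩ − cos θ| ≤ ε}) and p′ := σ_d({z : |⟨z, u⟩ − cos θ′| ≤ ε}). Let Z be the number of triples (i, j, k) of pairwise distinct indices in {1, …, m} such that x_i ≠ x_j, |⟨x_i, x_j⟩ − cos θ| ≤ ε, and |⟨(x_i − x_j)/‖x_i − x_j‖, x_k⟩ − cos θ′| ≤ ε. Then Var(Z) ≤ C·(m³·p·p′ + m⁴·p²·p′ + m⁴·p·p′² + m⁵·p²·p′²). -/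

import Mathlib

open MeasureTheory ProbabilityTheory
open scoped RealInnerProductSpace Classical

/-- `σ` is the uniform (normalized rotation-invariant) probability measure on the unit sphere
`S^{d−1} ⊆ ℝ^d`, viewed as a measure on `ℝ^d` concentrated on the sphere. -/
def IsUniformSphereMeasure (d : ℕ) (σ : Measure (EuclideanSpace ℝ (Fin d))) : Prop :=
  IsProbabilityMeasure σ ∧ σ (Metric.sphere (0 : EuclideanSpace ℝ (Fin d)) 1) = 1 ∧
    ∀ O : EuclideanSpace ℝ (Fin d) ≃ₗᵢ[ℝ] EuclideanSpace ℝ (Fin d), Measure.map (⇑O) σ = σ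

open scoped ENNReal

noncomputable section VT


variable {d : ℕ}

local notation "Eu" => EuclideanSpace ℝ (Fin d)

/-- normalized difference -/
def nv (a b : EuclideanSpace ℝ (Fin d)) : EuclideanSpace ℝ (Fin d) := ‖a - b‖⁻¹ • (a - b)

lemma nv_unit {a b : EuclideanSpace ℝ (Fin d)} (h : a ≠ b) : ‖nv a b‖ = 1 := by
  have h0 : a - b ≠ 0 := sub_ne_zero.mpr h
  have h1 : ‖a - b‖ ≠ 0 := norm_ne_zero_iff.mpr h0
  simp [nv, norm_smul, abs_of_nonneg (inv_nonneg.mpr (norm_nonneg _)), inv_mul_cancel₀ h1]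

lemma nv_isom (O : EuclideanSpace ℝ (Fin d) ≃ₗᵢ[ℝ] EuclideanSpace ℝ (Fin d)) (a b : Eu) :
    nv (O a) (O b) = O (nv a b) := by
  simp [nv, ← map_sub, ← _root_.map_smul]

lemma meas_nv : Measurable (fun q : Eu × Eu => nv q.1 q.2) := by
  have h1 : Measurable (fun q : Eu × Eu => q.1 - q.2) :=
    measurable_fst.sub measurable_snd
  exact (h1.norm.inv).smul h1

lemma exists_isom (v w : Eu) (h : ‖v‖ = ‖w‖) :
    ∃ O : EuclideanSpace ℝ (Fin d) ≃ₗᵢ[ℝ] EuclideanSpace ℝ (Fin d), O v = w :=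
  ⟨Submodule.reflection (ℝ ∙ (v - w))ᗮ, Submodule.reflection_sub h⟩

section Meas

variable (σ : Measure (EuclideanSpace ℝ (Fin d))) [IsProbabilityMeasure σ]

lemma meas_le_of_null_compl {α : Type*} [MeasurableSpace α] (ρ : Measure α) {U A B : Set α}
    (hU : ρ Uᶜ = 0) (h : A ∩ U ⊆ B) : ρ A ≤ ρ B := by
  calc ρ A ≤ ρ ((A ∩ U) ∪ Uᶜ) := by
        refine measure_mono fun a ha => ?_
        by_cases hU' : a ∈ U
        · exact Or.inl ⟨ha, hU'⟩
        · exact Or.inr hU'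
    _ ≤ ρ (A ∩ U) + ρ Uᶜ := measure_union_le _ _
    _ = ρ (A ∩ U) := by rw [hU, add_zero]
    _ ≤ ρ B := measure_mono h

variable (hsph : σ {z : EuclideanSpace ℝ (Fin d) | ‖z‖ = 1} = 1)

lemma unitset_meas : MeasurableSet {z : EuclideanSpace ℝ (Fin d) | ‖z‖ = 1} := by
  have : Continuous (fun z : Eu => ‖z‖) := continuous_norm
  exact this.measurable (measurableSet_singleton 1)

include hsph in
lemma unit_compl_null : σ {z : EuclideanSpace ℝ (Fin d) | ‖z‖ = 1}ᶜ = 0 := by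
  rw [measure_compl unitset_meas (measure_ne_top _ _), hsph, measure_univ, tsub_self]

include hsph in
lemma ae_unit : ∀ᵐ z ∂σ, ‖z‖ = 1 := by
  rw [MeasureTheory.ae_iff]
  exact unit_compl_null σ hsph

end Meas



section Core

variable (σ : Measure (EuclideanSpace ℝ (Fin d))) [IsProbabilityMeasure σ]
variable (θ θ' ε : ℝ)

/-- measurability helpers -/
lemma mset_abs {α : Type*} [MeasurableSpace α] {f : α → ℝ} (hf : Measurable f) (c e : ℝ) :
    MeasurableSet {x | |f x - c| ≤ e} :=
  measurableSet_le (hf.sub measurable_const).abs measurable_const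

lemma meas_inner2 : Measurable (fun q : (EuclideanSpace ℝ (Fin d)) × (EuclideanSpace ℝ (Fin d)) =>
    (⟪q.1, q.2⟫ : ℝ)) := continuous_inner.measurable

lemma ms_norm1 {α : Type*} [MeasurableSpace α] {f : α → EuclideanSpace ℝ (Fin d)}
    (hf : Measurable f) : MeasurableSet {x | ‖f x‖ = 1} :=
  hf.norm (measurableSet_singleton 1)

lemma ms_ne {α : Type*} [MeasurableSpace α] {f g : α → EuclideanSpace ℝ (Fin d)}
    (hf : Measurable f) (hg : Measurable g) : MeasurableSet {x | f x ≠ g x} :=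
  (measurableSet_eq_fun hf hg).compl

lemma ms_ipc {α : Type*} [MeasurableSpace α] {f g : α → EuclideanSpace ℝ (Fin d)}
    (hf : Measurable f) (hg : Measurable g) (c e : ℝ) :
    MeasurableSet {x | |(⟪f x, g x⟫ : ℝ) - c| ≤ e} :=
  mset_abs (meas_inner2.comp (hf.prodMk hg)) c e

def Pset : Set ((EuclideanSpace ℝ (Fin d)) × (EuclideanSpace ℝ (Fin d))) :=
  {q | ‖q.1‖ = 1 ∧ ‖q.2‖ = 1 ∧ |(⟪q.1, q.2⟫ : ℝ) - Real.cos θ| ≤ ε}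

lemma Pset_meas : MeasurableSet (Pset (d := d) θ ε) :=
  (ms_norm1 measurable_fst).inter ((ms_norm1 measurable_snd).inter
    (ms_ipc measurable_fst measurable_snd _ _))


lemma ms_unit_ip (v : EuclideanSpace ℝ (Fin d)) (c e : ℝ) :
    MeasurableSet {z : EuclideanSpace ℝ (Fin d) | ‖z‖ = 1 ∧ |(⟪v, z⟫ : ℝ) - c| ≤ e} :=
  (ms_norm1 measurable_id).inter (ms_ipc measurable_const measurable_id _ _)

variable (hrot : ∀ O : EuclideanSpace ℝ (Fin d) ≃ₗᵢ[ℝ] EuclideanSpace ℝ (Fin d),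
    Measure.map ⇑O σ = σ)
variable (hsph : σ {z : EuclideanSpace ℝ (Fin d) | ‖z‖ = 1} = 1)

include hrot in
lemma rot_apply (O : EuclideanSpace ℝ (Fin d) ≃ₗᵢ[ℝ] EuclideanSpace ℝ (Fin d))
    {S : Set (EuclideanSpace ℝ (Fin d))} (hS : MeasurableSet S) : σ (⇑O ⁻¹' S) = σ S := by
  conv_rhs => rw [← hrot O]
  rw [Measure.map_apply O.continuous.measurable hS]

include hsph in
lemma drop_unit {A : Set (EuclideanSpace ℝ (Fin d))} :
    σ A = σ (A ∩ {z | ‖z‖ = 1}) := by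
  refine le_antisymm (meas_le_of_null_compl σ (unit_compl_null σ hsph) (fun z hz => hz)) ?_
  exact measure_mono Set.inter_subset_left

include hrot hsph in
lemma L1 {v : EuclideanSpace ℝ (Fin d)} (hv : ‖v‖ = 1)
    {u : EuclideanSpace ℝ (Fin d)} (hu : ‖u‖ = 1) :
    σ {z | |(⟪v, z⟫ : ℝ) - Real.cos θ'| ≤ ε} = σ {z | ‖z‖ = 1 ∧ |(⟪z, u⟫ : ℝ) - Real.cos θ'| ≤ ε} := by
  obtain ⟨O, hO⟩ := exists_isom u v (by rw [hu, hv])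
  have h1 : σ {z | |(⟪v, z⟫ : ℝ) - Real.cos θ'| ≤ ε}
      = σ {z | ‖z‖ = 1 ∧ |(⟪v, z⟫ : ℝ) - Real.cos θ'| ≤ ε} := by
    rw [drop_unit σ hsph]
    congr 1
    ext z
    simp only [Set.mem_inter_iff, Set.mem_setOf_eq]
    tauto
  have h2 : ⇑O ⁻¹' {z | ‖z‖ = 1 ∧ |(⟪v, z⟫ : ℝ) - Real.cos θ'| ≤ ε}
      = {z | ‖z‖ = 1 ∧ |(⟪z, u⟫ : ℝ) - Real.cos θ'| ≤ ε} := by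
    ext z
    simp only [Set.mem_preimage, Set.mem_setOf_eq, O.norm_map]
    rw [← hO, O.inner_map_map, real_inner_comm]
  rw [h1, ← h2]
  exact (rot_apply σ hrot O (ms_unit_ip v _ _)).symm

include hrot hsph in
lemma L2 {v : EuclideanSpace ℝ (Fin d)} (hv : ‖v‖ = 1) :
    σ {z | |(⟪v, z⟫ : ℝ) - Real.cos θ| ≤ ε} = (σ.prod σ) (Pset θ ε) := by
  have hconst : ∀ a : EuclideanSpace ℝ (Fin d), ‖a‖ = 1 →
      σ {z | ‖z‖ = 1 ∧ |(⟪a, z⟫ : ℝ) - Real.cos θ| ≤ ε}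
        = σ {z | ‖z‖ = 1 ∧ |(⟪v, z⟫ : ℝ) - Real.cos θ| ≤ ε} := by
    intro a ha
    obtain ⟨O, hO⟩ := exists_isom a v (by rw [ha, hv])
    have h2 : ⇑O ⁻¹' {z | ‖z‖ = 1 ∧ |(⟪v, z⟫ : ℝ) - Real.cos θ| ≤ ε}
        = {z | ‖z‖ = 1 ∧ |(⟪a, z⟫ : ℝ) - Real.cos θ| ≤ ε} := by
      ext z
      simp only [Set.mem_preimage, Set.mem_setOf_eq, O.norm_map]
      rw [← hO, O.inner_map_map]
    rw [← h2]
    exact rot_apply σ hrot O (ms_unit_ip v _ _)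
  have hPP : (σ.prod σ) (Pset θ ε)
      = ∫⁻ a, σ (Prod.mk a ⁻¹' (Pset (d := d) θ ε)) ∂σ :=
    Measure.prod_apply (Pset_meas θ ε)
  have hsec : ∀ᵐ a ∂σ, σ (Prod.mk a ⁻¹' (Pset (d := d) θ ε))
      = σ {z | ‖z‖ = 1 ∧ |(⟪v, z⟫ : ℝ) - Real.cos θ| ≤ ε} := by
    filter_upwards [ae_unit σ hsph] with a ha
    have : Prod.mk a ⁻¹' (Pset (d := d) θ ε)
        = {z | ‖z‖ = 1 ∧ |(⟪a, z⟫ : ℝ) - Real.cos θ| ≤ ε} := by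
      ext z
      simp only [Set.mem_preimage, Pset, Set.mem_setOf_eq, ha, true_and]
    rw [this, hconst a ha]
  rw [hPP, lintegral_congr_ae hsec, lintegral_const, measure_univ, mul_one]
  rw [drop_unit σ hsph]
  congr 1
  ext z
  simp only [Set.mem_inter_iff, Set.mem_setOf_eq]
  tauto

include hrot hsph in
lemma L2' {v : EuclideanSpace ℝ (Fin d)} (hv : ‖v‖ = 1) :
    σ {z | |(⟪z, v⟫ : ℝ) - Real.cos θ| ≤ ε} = (σ.prod σ) (Pset θ ε) := by
  rw [← L2 σ θ ε hrot hsph hv]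
  congr 1
  ext z
  simp only [Set.mem_setOf_eq, real_inner_comm]

end Core
section Core2

variable (σ : Measure (EuclideanSpace ℝ (Fin d))) [IsProbabilityMeasure σ]
variable (θ θ' ε : ℝ)

def Qtset : Set (((EuclideanSpace ℝ (Fin d)) × (EuclideanSpace ℝ (Fin d))) ×
    (EuclideanSpace ℝ (Fin d))) :=
  {r | r.1.1 ≠ r.1.2 ∧ |(⟪r.1.1, r.1.2⟫ : ℝ) - Real.cos θ| ≤ ε ∧
    |(⟪nv r.1.1 r.1.2, r.2⟫ : ℝ) - Real.cos θ'| ≤ ε}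

lemma Qtset_meas : MeasurableSet (Qtset (d := d) θ θ' ε) :=
  (ms_ne measurable_fst.fst measurable_fst.snd).inter
    ((ms_ipc measurable_fst.fst measurable_fst.snd _ _).inter
      (ms_ipc (meas_nv.comp measurable_fst) measurable_snd _ _))

def Fset (v : EuclideanSpace ℝ (Fin d)) :
    Set ((EuclideanSpace ℝ (Fin d)) × (EuclideanSpace ℝ (Fin d))) :=
  {q | q.1 ≠ q.2 ∧ |(⟪q.1, q.2⟫ : ℝ) - Real.cos θ| ≤ ε ∧
    |(⟪nv q.1 q.2, v⟫ : ℝ) - Real.cos θ'| ≤ ε}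

lemma Fset_meas (v : EuclideanSpace ℝ (Fin d)) : MeasurableSet (Fset θ θ' ε v) :=
  (ms_ne measurable_fst measurable_snd).inter
    ((ms_ipc measurable_fst measurable_snd _ _).inter
      (ms_ipc meas_nv measurable_const _ _))

lemma mspair : MeasurableSet {q : (EuclideanSpace ℝ (Fin d)) × (EuclideanSpace ℝ (Fin d)) |
    q.1 ≠ q.2 ∧ |(⟪q.1, q.2⟫ : ℝ) - Real.cos θ| ≤ ε} :=
  (ms_ne measurable_fst measurable_snd).inter (ms_ipc measurable_fst measurable_snd _ _)

variable (hrot : ∀ O : EuclideanSpace ℝ (Fin d) ≃ₗᵢ[ℝ] EuclideanSpace ℝ (Fin d),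
    Measure.map ⇑O σ = σ)
variable (hsph : σ {z : EuclideanSpace ℝ (Fin d) | ‖z‖ = 1} = 1)

include hsph in
lemma unit2_compl_null :
    (σ.prod σ) {q : (EuclideanSpace ℝ (Fin d)) × (EuclideanSpace ℝ (Fin d)) |
      ‖q.1‖ = 1 ∧ ‖q.2‖ = 1}ᶜ = 0 := by
  have h : {q : (EuclideanSpace ℝ (Fin d)) × (EuclideanSpace ℝ (Fin d)) |
      ‖q.1‖ = 1 ∧ ‖q.2‖ = 1} = {z : EuclideanSpace ℝ (Fin d) | ‖z‖ = 1} ×ˢ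
        {z : EuclideanSpace ℝ (Fin d) | ‖z‖ = 1} := rfl
  rw [measure_compl (by rw [h]; exact unitset_meas.prod unitset_meas) (measure_ne_top _ _),
    h, Measure.prod_prod, hsph, measure_univ, one_mul, tsub_self]

include hsph in
lemma pair_le_P :
    (σ.prod σ) {q : (EuclideanSpace ℝ (Fin d)) × (EuclideanSpace ℝ (Fin d)) |
      q.1 ≠ q.2 ∧ |(⟪q.1, q.2⟫ : ℝ) - Real.cos θ| ≤ ε} ≤ (σ.prod σ) (Pset θ ε) :=
  meas_le_of_null_compl _ (unit2_compl_null σ hsph) (fun _ hq => ⟨hq.2.1, hq.2.2, hq.1.2⟩)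

variable (u : EuclideanSpace ℝ (Fin d))

include hrot hsph in
lemma QTbound (hu : ‖u‖ = 1) :
    ((σ.prod σ).prod σ) (Qtset θ θ' ε) ≤
      (σ.prod σ) (Pset θ ε) * σ {z | ‖z‖ = 1 ∧ |(⟪z, u⟫ : ℝ) - Real.cos θ'| ≤ ε} := by
  rw [Measure.prod_apply (Qtset_meas θ θ' ε)]
  have hpt : (fun q : (EuclideanSpace ℝ (Fin d)) × (EuclideanSpace ℝ (Fin d)) =>
      σ (Prod.mk q ⁻¹' Qtset θ θ' ε)) =
      Set.indicator {q : (EuclideanSpace ℝ (Fin d)) × (EuclideanSpace ℝ (Fin d)) |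
        q.1 ≠ q.2 ∧ |(⟪q.1, q.2⟫ : ℝ) - Real.cos θ| ≤ ε}
        (fun _ => σ {z | ‖z‖ = 1 ∧ |(⟪z, u⟫ : ℝ) - Real.cos θ'| ≤ ε}) := by
    funext q
    by_cases hq : q ∈ {q : (EuclideanSpace ℝ (Fin d)) × (EuclideanSpace ℝ (Fin d)) |
        q.1 ≠ q.2 ∧ |(⟪q.1, q.2⟫ : ℝ) - Real.cos θ| ≤ ε}
    · rw [Set.indicator_of_mem hq]
      have h : Prod.mk q ⁻¹' Qtset θ θ' ε =
          {z | |(⟪nv q.1 q.2, z⟫ : ℝ) - Real.cos θ'| ≤ ε} := by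
        ext z
        simp only [Set.mem_preimage, Qtset, Set.mem_setOf_eq, hq.1, hq.2, true_and,
          ne_eq, not_false_eq_true]
      rw [h, L1 σ θ' ε hrot hsph (nv_unit hq.1) hu]
    · rw [Set.indicator_of_notMem hq]
      have h : Prod.mk q ⁻¹' Qtset θ θ' ε = ∅ := by
        ext z
        simp only [Set.mem_preimage, Qtset, Set.mem_setOf_eq, Set.mem_empty_iff_false,
          iff_false, not_and]
        intro h1 h2
        exact absurd ⟨h1, h2⟩ hq
      rw [h, measure_empty]
  rw [hpt, lintegral_indicator (mspair θ ε), setLIntegral_const]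
  rw [mul_comm]
  exact mul_le_mul_left (pair_le_P σ θ ε hsph) _

include hrot hsph in
lemma L3 {v : EuclideanSpace ℝ (Fin d)} (hv : ‖v‖ = 1) (hu : ‖u‖ = 1) :
    (σ.prod σ) (Fset θ θ' ε v) ≤
      (σ.prod σ) (Pset θ ε) * σ {z | ‖z‖ = 1 ∧ |(⟪z, u⟫ : ℝ) - Real.cos θ'| ≤ ε} := by
  have hM : ((σ.prod σ).prod σ) (Qtset θ θ' ε) = (σ.prod σ) (Fset θ θ' ε v) := by
    rw [Measure.prod_apply_symm (Qtset_meas θ θ' ε)]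
    have hae : ∀ᵐ z ∂σ, (σ.prod σ) ((fun q => (q, z)) ⁻¹' Qtset θ θ' ε) =
        (σ.prod σ) (Fset θ θ' ε v) := by
      filter_upwards [ae_unit σ hsph] with z hz
      obtain ⟨O, hO⟩ := exists_isom z v (by rw [hz, hv])
      have hpre : (fun q : (EuclideanSpace ℝ (Fin d)) × (EuclideanSpace ℝ (Fin d)) =>
          (q, z)) ⁻¹' Qtset θ θ' ε = Prod.map ⇑O ⇑O ⁻¹' Fset θ θ' ε v := by
        ext q
        simp only [Set.mem_preimage, Qtset, Fset, Set.mem_setOf_eq, Prod.map_fst, Prod.map_snd,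
          nv_isom, ← hO, O.inner_map_map, ne_eq, EmbeddingLike.apply_eq_iff_eq]
      rw [hpre, ← Measure.map_apply (O.continuous.measurable.prodMap O.continuous.measurable)
        (Fset_meas θ θ' ε v), ← Measure.map_prod_map σ σ O.continuous.measurable
        O.continuous.measurable, hrot O]
    rw [lintegral_congr_ae hae, lintegral_const, measure_univ, mul_one]
  rw [← hM]
  exact QTbound σ θ θ' ε hrot hsph u hu

include hrot hsph in
lemma L4a {v : EuclideanSpace ℝ (Fin d)} (hv : ‖v‖ = 1) (hu : ‖u‖ = 1) :
    (σ.prod σ) {q : (EuclideanSpace ℝ (Fin d)) × (EuclideanSpace ℝ (Fin d)) |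
        v ≠ q.1 ∧ |(⟪v, q.1⟫ : ℝ) - Real.cos θ| ≤ ε ∧
        |(⟪nv v q.1, q.2⟫ : ℝ) - Real.cos θ'| ≤ ε} ≤
      (σ.prod σ) (Pset θ ε) * σ {z | ‖z‖ = 1 ∧ |(⟪z, u⟫ : ℝ) - Real.cos θ'| ≤ ε} := by
  have hms : MeasurableSet {q : (EuclideanSpace ℝ (Fin d)) × (EuclideanSpace ℝ (Fin d)) |
      v ≠ q.1 ∧ |(⟪v, q.1⟫ : ℝ) - Real.cos θ| ≤ ε ∧
      |(⟪nv v q.1, q.2⟫ : ℝ) - Real.cos θ'| ≤ ε} :=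
    (ms_ne measurable_const measurable_fst).inter
      ((ms_ipc measurable_const measurable_fst _ _).inter
        (ms_ipc (meas_nv.comp (measurable_const.prodMk measurable_fst)) measurable_snd _ _))
  rw [Measure.prod_apply hms]
  have hpt : (fun y : EuclideanSpace ℝ (Fin d) => σ (Prod.mk y ⁻¹'
      {q : (EuclideanSpace ℝ (Fin d)) × (EuclideanSpace ℝ (Fin d)) |
        v ≠ q.1 ∧ |(⟪v, q.1⟫ : ℝ) - Real.cos θ| ≤ ε ∧
        |(⟪nv v q.1, q.2⟫ : ℝ) - Real.cos θ'| ≤ ε})) =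
      Set.indicator {y : EuclideanSpace ℝ (Fin d) | v ≠ y ∧ |(⟪v, y⟫ : ℝ) - Real.cos θ| ≤ ε}
        (fun _ => σ {z | ‖z‖ = 1 ∧ |(⟪z, u⟫ : ℝ) - Real.cos θ'| ≤ ε}) := by
    funext y
    by_cases hy : y ∈ {y : EuclideanSpace ℝ (Fin d) | v ≠ y ∧ |(⟪v, y⟫ : ℝ) - Real.cos θ| ≤ ε}
    · rw [Set.indicator_of_mem hy]
      have h : Prod.mk y ⁻¹' {q : (EuclideanSpace ℝ (Fin d)) × (EuclideanSpace ℝ (Fin d)) |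
          v ≠ q.1 ∧ |(⟪v, q.1⟫ : ℝ) - Real.cos θ| ≤ ε ∧
          |(⟪nv v q.1, q.2⟫ : ℝ) - Real.cos θ'| ≤ ε} =
          {z | |(⟪nv v y, z⟫ : ℝ) - Real.cos θ'| ≤ ε} := by
        ext z
        simp only [Set.mem_preimage, Set.mem_setOf_eq, hy.1, hy.2, true_and, ne_eq,
          not_false_eq_true]
      rw [h, L1 σ θ' ε hrot hsph (nv_unit hy.1) hu]
    · rw [Set.indicator_of_notMem hy]
      have h : Prod.mk y ⁻¹' {q : (EuclideanSpace ℝ (Fin d)) × (EuclideanSpace ℝ (Fin d)) |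
          v ≠ q.1 ∧ |(⟪v, q.1⟫ : ℝ) - Real.cos θ| ≤ ε ∧
          |(⟪nv v q.1, q.2⟫ : ℝ) - Real.cos θ'| ≤ ε} = ∅ := by
        ext z
        simp only [Set.mem_preimage, Set.mem_setOf_eq, Set.mem_empty_iff_false, iff_false,
          not_and]
        intro h1 h2 _
        exact absurd ⟨h1, h2⟩ hy
      rw [h, measure_empty]
  have hmsy : MeasurableSet {y : EuclideanSpace ℝ (Fin d) |
      v ≠ y ∧ |(⟪v, y⟫ : ℝ) - Real.cos θ| ≤ ε} :=
    (ms_ne measurable_const measurable_id).inter (ms_ipc measurable_const measurable_id _ _)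
  rw [hpt, lintegral_indicator hmsy, setLIntegral_const, mul_comm]
  refine mul_le_mul' ?_ le_rfl
  calc σ {y | v ≠ y ∧ |(⟪v, y⟫ : ℝ) - Real.cos θ| ≤ ε}
      ≤ σ {y | |(⟪v, y⟫ : ℝ) - Real.cos θ| ≤ ε} := measure_mono (fun y hy => hy.2)
    _ = (σ.prod σ) (Pset θ ε) := L2 σ θ ε hrot hsph hv

include hrot hsph in
lemma L4b {v : EuclideanSpace ℝ (Fin d)} (hv : ‖v‖ = 1) (hu : ‖u‖ = 1) :
    (σ.prod σ) {q : (EuclideanSpace ℝ (Fin d)) × (EuclideanSpace ℝ (Fin d)) |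
        q.1 ≠ v ∧ |(⟪q.1, v⟫ : ℝ) - Real.cos θ| ≤ ε ∧
        |(⟪nv q.1 v, q.2⟫ : ℝ) - Real.cos θ'| ≤ ε} ≤
      (σ.prod σ) (Pset θ ε) * σ {z | ‖z‖ = 1 ∧ |(⟪z, u⟫ : ℝ) - Real.cos θ'| ≤ ε} := by
  have hms : MeasurableSet {q : (EuclideanSpace ℝ (Fin d)) × (EuclideanSpace ℝ (Fin d)) |
      q.1 ≠ v ∧ |(⟪q.1, v⟫ : ℝ) - Real.cos θ| ≤ ε ∧
      |(⟪nv q.1 v, q.2⟫ : ℝ) - Real.cos θ'| ≤ ε} :=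
    (ms_ne measurable_fst measurable_const).inter
      ((ms_ipc measurable_fst measurable_const _ _).inter
        (ms_ipc (meas_nv.comp (measurable_fst.prodMk measurable_const)) measurable_snd _ _))
  rw [Measure.prod_apply hms]
  have hpt : (fun y : EuclideanSpace ℝ (Fin d) => σ (Prod.mk y ⁻¹'
      {q : (EuclideanSpace ℝ (Fin d)) × (EuclideanSpace ℝ (Fin d)) |
        q.1 ≠ v ∧ |(⟪q.1, v⟫ : ℝ) - Real.cos θ| ≤ ε ∧
        |(⟪nv q.1 v, q.2⟫ : ℝ) - Real.cos θ'| ≤ ε})) =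
      Set.indicator {y : EuclideanSpace ℝ (Fin d) | y ≠ v ∧ |(⟪y, v⟫ : ℝ) - Real.cos θ| ≤ ε}
        (fun _ => σ {z | ‖z‖ = 1 ∧ |(⟪z, u⟫ : ℝ) - Real.cos θ'| ≤ ε}) := by
    funext y
    by_cases hy : y ∈ {y : EuclideanSpace ℝ (Fin d) | y ≠ v ∧ |(⟪y, v⟫ : ℝ) - Real.cos θ| ≤ ε}
    · rw [Set.indicator_of_mem hy]
      have h : Prod.mk y ⁻¹' {q : (EuclideanSpace ℝ (Fin d)) × (EuclideanSpace ℝ (Fin d)) |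
          q.1 ≠ v ∧ |(⟪q.1, v⟫ : ℝ) - Real.cos θ| ≤ ε ∧
          |(⟪nv q.1 v, q.2⟫ : ℝ) - Real.cos θ'| ≤ ε} =
          {z | |(⟪nv y v, z⟫ : ℝ) - Real.cos θ'| ≤ ε} := by
        ext z
        simp only [Set.mem_preimage, Set.mem_setOf_eq, hy.1, hy.2, true_and, ne_eq,
          not_false_eq_true]
      rw [h, L1 σ θ' ε hrot hsph (nv_unit hy.1) hu]
    · rw [Set.indicator_of_notMem hy]
      have h : Prod.mk y ⁻¹' {q : (EuclideanSpace ℝ (Fin d)) × (EuclideanSpace ℝ (Fin d)) |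
          q.1 ≠ v ∧ |(⟪q.1, v⟫ : ℝ) - Real.cos θ| ≤ ε ∧
          |(⟪nv q.1 v, q.2⟫ : ℝ) - Real.cos θ'| ≤ ε} = ∅ := by
        ext z
        simp only [Set.mem_preimage, Set.mem_setOf_eq, Set.mem_empty_iff_false, iff_false,
          not_and]
        intro h1 h2 _
        exact absurd ⟨h1, h2⟩ hy
      rw [h, measure_empty]
  have hmsy : MeasurableSet {y : EuclideanSpace ℝ (Fin d) |
      y ≠ v ∧ |(⟪y, v⟫ : ℝ) - Real.cos θ| ≤ ε} :=
    (ms_ne measurable_id measurable_const).inter (ms_ipc measurable_id measurable_const _ _)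
  rw [hpt, lintegral_indicator hmsy, setLIntegral_const, mul_comm]
  refine mul_le_mul' ?_ le_rfl
  calc σ {y | y ≠ v ∧ |(⟪y, v⟫ : ℝ) - Real.cos θ| ≤ ε}
      ≤ σ {y | |(⟪y, v⟫ : ℝ) - Real.cos θ| ≤ ε} := measure_mono (fun y hy => hy.2)
    _ = (σ.prod σ) (Pset θ ε) := L2' σ θ ε hrot hsph hv

include hsph in
lemma ae_unit3 : ∀ᵐ r ∂((σ.prod σ).prod σ),
    ‖(r : ((EuclideanSpace ℝ (Fin d)) × (EuclideanSpace ℝ (Fin d))) ×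
      (EuclideanSpace ℝ (Fin d))).1.1‖ = 1 ∧ ‖r.1.2‖ = 1 ∧ ‖r.2‖ = 1 := by
  have key : ∀ S : Set (((EuclideanSpace ℝ (Fin d)) × (EuclideanSpace ℝ (Fin d))) ×
      (EuclideanSpace ℝ (Fin d))), (((σ.prod σ).prod σ) S = 0) →
      ∀ᵐ r ∂((σ.prod σ).prod σ), r ∉ S := by
    intro S hS
    rw [MeasureTheory.ae_iff]
    simpa using measure_mono_null (fun r hr => by simpa using hr) hS
  have h1 := key ((({z : EuclideanSpace ℝ (Fin d) | ‖z‖ = 1}ᶜ ×ˢ Set.univ) ×ˢ Set.univ))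
    (by rw [Measure.prod_prod, Measure.prod_prod, unit_compl_null σ hsph]; simp)
  have h2 := key (((Set.univ ×ˢ {z : EuclideanSpace ℝ (Fin d) | ‖z‖ = 1}ᶜ) ×ˢ Set.univ))
    (by rw [Measure.prod_prod, Measure.prod_prod, unit_compl_null σ hsph]; simp)
  have h3 := key ((Set.univ ×ˢ {z : EuclideanSpace ℝ (Fin d) | ‖z‖ = 1}ᶜ))
    (by rw [Measure.prod_prod, unit_compl_null σ hsph]; simp)
  filter_upwards [h1, h2, h3] with r hr1 hr2 hr3
  refine ⟨?_, ?_, ?_⟩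
  · by_contra hc
    exact hr1 ⟨⟨hc, trivial⟩, trivial⟩
  · by_contra hc
    exact hr2 ⟨⟨trivial, hc⟩, trivial⟩
  · by_contra hc
    exact hr3 ⟨trivial, hc⟩

lemma peel {α β : Type*} [MeasurableSpace α] [MeasurableSpace β] (ρ : Measure α)
    (τ : Measure β) [SFinite τ] {S : Set (α × β)} (hS : MeasurableSet S) {A : Set α}
    (hA : MeasurableSet A) {K : ℝ≥0∞}
    (hsub : ∀ a b, (a, b) ∈ S → a ∈ A)
    (hsec : ∀ᵐ a ∂ρ, a ∈ A → τ {b | (a, b) ∈ S} ≤ K) :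
    (ρ.prod τ) S ≤ K * ρ A := by
  rw [Measure.prod_apply hS]
  calc ∫⁻ a, τ (Prod.mk a ⁻¹' S) ∂ρ ≤ ∫⁻ a, A.indicator (fun _ => K) a ∂ρ := by
        refine lintegral_mono_ae ?_
        filter_upwards [hsec] with a ha
        by_cases hA' : a ∈ A
        · rw [Set.indicator_of_mem hA']
          exact ha hA'
        · rw [Set.indicator_of_notMem hA']
          have h : Prod.mk a ⁻¹' S = ∅ := by
            ext b
            simp only [Set.mem_preimage, Set.mem_empty_iff_false, iff_false]
            exact fun hb => hA' (hsub a b hb)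
          rw [h, measure_empty]
    _ = K * ρ A := by rw [lintegral_indicator hA, setLIntegral_const]

end Core2
section Law

variable (σ : Measure (EuclideanSpace ℝ (Fin d))) [IsProbabilityMeasure σ]
variable {Ω : Type} [MeasurableSpace Ω] (μ : Measure Ω) [IsProbabilityMeasure μ]
variable {m : ℕ} (x : Fin m → Ω → EuclideanSpace ℝ (Fin d))
variable (hxm : ∀ i, Measurable (x i))
variable (hxd : ∀ i, Measure.map (x i) μ = σ)
variable (hind : iIndepFun x μ)

include hxm hxd hind in
lemma JL2 {i j : Fin m} (hij : i ≠ j) :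
    Measure.map (fun ω => (x i ω, x j ω)) μ = σ.prod σ := by
  have h := hind.indepFun hij
  rw [(indepFun_iff_map_prod_eq_prod_map_map (hxm i).aemeasurable
    (hxm j).aemeasurable).mp h, hxd i, hxd j]

include hxm hxd hind in
lemma JL3 {i j k : Fin m} (hij : i ≠ j) (hik : i ≠ k) (hjk : j ≠ k) :
    Measure.map (fun ω => ((x i ω, x j ω), x k ω)) μ = (σ.prod σ).prod σ := by
  have h : IndepFun (fun ω => (x i ω, x j ω)) (x k) μ :=
    hind.indepFun_prodMk hxm i j k hik hjk
  rw [(indepFun_iff_map_prod_eq_prod_map_map ((hxm i).prodMk (hxm j)).aemeasurable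
    (hxm k).aemeasurable).mp h, JL2 σ μ x hxm hxd hind hij, hxd k]

include hxm hind in
lemma indepT3 {i j k : Fin m} {T : Finset (Fin m)}
    (hdisj : Disjoint ({i, j, k} : Finset (Fin m)) T) {β : Type*} [MeasurableSpace β]
    (ψ : (T → EuclideanSpace ℝ (Fin d)) → β) (hψ : Measurable ψ) :
    IndepFun (fun ω => ((x i ω, x j ω), x k ω)) (fun ω => ψ (fun e => x e ω)) μ := by
  classical
  have h0 := hind.indepFun_finset {i, j, k} T hdisj hxm
  have hi : i ∈ ({i, j, k} : Finset (Fin m)) := by simp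
  have hj : j ∈ ({i, j, k} : Finset (Fin m)) := by simp
  have hk : k ∈ ({i, j, k} : Finset (Fin m)) := by simp
  have hφ : Measurable (fun g : ({i, j, k} : Finset (Fin m)) → EuclideanSpace ℝ (Fin d) =>
      ((g ⟨i, hi⟩, g ⟨j, hj⟩), g ⟨k, hk⟩)) :=
    ((measurable_pi_apply _).prodMk (measurable_pi_apply _)).prodMk (measurable_pi_apply _)
  exact h0.comp hφ hψ

include hxm hxd hind in
lemma JL4 {i j k f : Fin m} (hij : i ≠ j) (hik : i ≠ k) (hjk : j ≠ k)
    (hfi : f ≠ i) (hfj : f ≠ j) (hfk : f ≠ k) :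
    Measure.map (fun ω => (((x i ω, x j ω), x k ω), x f ω)) μ =
      ((σ.prod σ).prod σ).prod σ := by
  classical
  have hdisj : Disjoint ({i, j, k} : Finset (Fin m)) ({f} : Finset (Fin m)) := by
    rw [Finset.disjoint_singleton_right]
    simp [hfi, hfj, hfk]
  have hf : f ∈ ({f} : Finset (Fin m)) := by simp
  have h : IndepFun (fun ω => ((x i ω, x j ω), x k ω)) (x f) μ :=
    indepT3 μ x hxm hind hdisj (fun g => g ⟨f, hf⟩) (measurable_pi_apply _)
  rw [(indepFun_iff_map_prod_eq_prod_map_map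
    (((hxm i).prodMk (hxm j)).prodMk (hxm k)).aemeasurable (hxm f).aemeasurable).mp h,
    JL3 σ μ x hxm hxd hind hij hik hjk, hxd f]

include hxm hxd hind in
lemma JL5 {i j k f₁ f₂ : Fin m} (hij : i ≠ j) (hik : i ≠ k) (hjk : j ≠ k)
    (hf1i : f₁ ≠ i) (hf1j : f₁ ≠ j) (hf1k : f₁ ≠ k)
    (hf2i : f₂ ≠ i) (hf2j : f₂ ≠ j) (hf2k : f₂ ≠ k) (hf12 : f₁ ≠ f₂) :
    Measure.map (fun ω => (((x i ω, x j ω), x k ω), (x f₁ ω, x f₂ ω))) μ =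
      ((σ.prod σ).prod σ).prod (σ.prod σ) := by
  classical
  have hdisj : Disjoint ({i, j, k} : Finset (Fin m)) ({f₁, f₂} : Finset (Fin m)) := by
    rw [Finset.disjoint_right]
    intro a ha
    simp only [Finset.mem_insert, Finset.mem_singleton] at ha ⊢
    rcases ha with h | h <;> subst h <;>
      simp [hf1i, hf1j, hf1k, hf2i, hf2j, hf2k]
  have hf1 : f₁ ∈ ({f₁, f₂} : Finset (Fin m)) := by simp
  have hf2 : f₂ ∈ ({f₁, f₂} : Finset (Fin m)) := by simp
  have h : IndepFun (fun ω => ((x i ω, x j ω), x k ω)) (fun ω => (x f₁ ω, x f₂ ω)) μ :=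
    indepT3 μ x hxm hind hdisj (fun g => (g ⟨f₁, hf1⟩, g ⟨f₂, hf2⟩))
      ((measurable_pi_apply _).prodMk (measurable_pi_apply _))
  rw [(indepFun_iff_map_prod_eq_prod_map_map
    (((hxm i).prodMk (hxm j)).prodMk (hxm k)).aemeasurable
    ((hxm f₁).prodMk (hxm f₂)).aemeasurable).mp h,
    JL3 σ μ x hxm hxd hind hij hik hjk, JL2 σ μ x hxm hxd hind hf12]

end Law
section Patterns

variable (σ : Measure (EuclideanSpace ℝ (Fin d))) [IsProbabilityMeasure σ]
variable (θ θ' ε : ℝ) (u : EuclideanSpace ℝ (Fin d))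
variable {Ω : Type} [MeasurableSpace Ω] (μ : Measure Ω) [IsProbabilityMeasure μ]
variable {m : ℕ} (x : Fin m → Ω → EuclideanSpace ℝ (Fin d))
variable (hrot : ∀ O : EuclideanSpace ℝ (Fin d) ≃ₗᵢ[ℝ] EuclideanSpace ℝ (Fin d),
    Measure.map ⇑O σ = σ)
variable (hsph : σ {z : EuclideanSpace ℝ (Fin d) | ‖z‖ = 1} = 1)
variable (hxm : ∀ i, Measurable (x i))
variable (hxd : ∀ i, Measure.map (x i) μ = σ)
variable (hind : iIndepFun x μ)

def Qev (t : Fin m × Fin m × Fin m) : Set Ω :=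
  {ω | x t.1 ω ≠ x t.2.1 ω ∧ |(⟪x t.1 ω, x t.2.1 ω⟫ : ℝ) - Real.cos θ| ≤ ε ∧
    |(⟪nv (x t.1 ω) (x t.2.1 ω), x t.2.2 ω⟫ : ℝ) - Real.cos θ'| ≤ ε}

lemma Qev_preim (t : Fin m × Fin m × Fin m) : Qev θ θ' ε x t =
    (fun ω => ((x t.1 ω, x t.2.1 ω), x t.2.2 ω)) ⁻¹' Qtset θ θ' ε := rfl

include hxm in
lemma Qev_meas (t : Fin m × Fin m × Fin m) : MeasurableSet (Qev θ θ' ε x t) := by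
  rw [Qev_preim]
  exact (((hxm _).prodMk (hxm _)).prodMk (hxm _)) (Qtset_meas θ θ' ε)

include hrot hsph hxm hxd hind in
lemma pat3 {t : Fin m × Fin m × Fin m} (ht1 : t.1 ≠ t.2.1) (ht2 : t.1 ≠ t.2.2)
    (ht3 : t.2.1 ≠ t.2.2) (hu : ‖u‖ = 1) :
    μ (Qev θ θ' ε x t) ≤
      (σ.prod σ) (Pset θ ε) * σ {z | ‖z‖ = 1 ∧ |(⟪z, u⟫ : ℝ) - Real.cos θ'| ≤ ε} := by
  rw [Qev_preim, ← Measure.map_apply (((hxm _).prodMk (hxm _)).prodMk (hxm _))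
    (Qtset_meas θ θ' ε), JL3 σ μ x hxm hxd hind ht1 ht2 ht3]
  exact QTbound σ θ θ' ε hrot hsph u hu

/-! Pattern sets -/

def S2a (g₁ g₂ : ((EuclideanSpace ℝ (Fin d)) × (EuclideanSpace ℝ (Fin d))) ×
    (EuclideanSpace ℝ (Fin d)) → EuclideanSpace ℝ (Fin d)) :
    Set ((((EuclideanSpace ℝ (Fin d)) × (EuclideanSpace ℝ (Fin d))) ×
      (EuclideanSpace ℝ (Fin d))) × (EuclideanSpace ℝ (Fin d))) :=
  {r | r.1 ∈ Qtset θ θ' ε ∧ g₁ r.1 ≠ g₂ r.1 ∧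
    |(⟪nv (g₁ r.1) (g₂ r.1), r.2⟫ : ℝ) - Real.cos θ'| ≤ ε}

def S2b (g : ((EuclideanSpace ℝ (Fin d)) × (EuclideanSpace ℝ (Fin d))) ×
    (EuclideanSpace ℝ (Fin d)) → EuclideanSpace ℝ (Fin d)) :
    Set ((((EuclideanSpace ℝ (Fin d)) × (EuclideanSpace ℝ (Fin d))) ×
      (EuclideanSpace ℝ (Fin d))) × (EuclideanSpace ℝ (Fin d))) :=
  {r | r.1 ∈ Qtset θ θ' ε ∧ |(⟪r.2, g r.1⟫ : ℝ) - Real.cos θ| ≤ ε}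

def S2c (g : ((EuclideanSpace ℝ (Fin d)) × (EuclideanSpace ℝ (Fin d))) ×
    (EuclideanSpace ℝ (Fin d)) → EuclideanSpace ℝ (Fin d)) :
    Set ((((EuclideanSpace ℝ (Fin d)) × (EuclideanSpace ℝ (Fin d))) ×
      (EuclideanSpace ℝ (Fin d))) × (EuclideanSpace ℝ (Fin d))) :=
  {r | r.1 ∈ Qtset θ θ' ε ∧ |(⟪g r.1, r.2⟫ : ℝ) - Real.cos θ| ≤ ε}

def S1a (g : ((EuclideanSpace ℝ (Fin d)) × (EuclideanSpace ℝ (Fin d))) ×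
    (EuclideanSpace ℝ (Fin d)) → EuclideanSpace ℝ (Fin d)) :
    Set ((((EuclideanSpace ℝ (Fin d)) × (EuclideanSpace ℝ (Fin d))) ×
      (EuclideanSpace ℝ (Fin d))) ×
      ((EuclideanSpace ℝ (Fin d)) × (EuclideanSpace ℝ (Fin d)))) :=
  {r | r.1 ∈ Qtset θ θ' ε ∧ g r.1 ≠ r.2.1 ∧ |(⟪g r.1, r.2.1⟫ : ℝ) - Real.cos θ| ≤ ε ∧
    |(⟪nv (g r.1) r.2.1, r.2.2⟫ : ℝ) - Real.cos θ'| ≤ ε}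

def S1b (g : ((EuclideanSpace ℝ (Fin d)) × (EuclideanSpace ℝ (Fin d))) ×
    (EuclideanSpace ℝ (Fin d)) → EuclideanSpace ℝ (Fin d)) :
    Set ((((EuclideanSpace ℝ (Fin d)) × (EuclideanSpace ℝ (Fin d))) ×
      (EuclideanSpace ℝ (Fin d))) ×
      ((EuclideanSpace ℝ (Fin d)) × (EuclideanSpace ℝ (Fin d)))) :=
  {r | r.1 ∈ Qtset θ θ' ε ∧ r.2.1 ≠ g r.1 ∧ |(⟪r.2.1, g r.1⟫ : ℝ) - Real.cos θ| ≤ ε ∧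
    |(⟪nv r.2.1 (g r.1), r.2.2⟫ : ℝ) - Real.cos θ'| ≤ ε}

def S1c (g : ((EuclideanSpace ℝ (Fin d)) × (EuclideanSpace ℝ (Fin d))) ×
    (EuclideanSpace ℝ (Fin d)) → EuclideanSpace ℝ (Fin d)) :
    Set ((((EuclideanSpace ℝ (Fin d)) × (EuclideanSpace ℝ (Fin d))) ×
      (EuclideanSpace ℝ (Fin d))) ×
      ((EuclideanSpace ℝ (Fin d)) × (EuclideanSpace ℝ (Fin d)))) :=
  {r | r.1 ∈ Qtset θ θ' ε ∧ r.2.1 ≠ r.2.2 ∧ |(⟪r.2.1, r.2.2⟫ : ℝ) - Real.cos θ| ≤ ε ∧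
    |(⟪nv r.2.1 r.2.2, g r.1⟫ : ℝ) - Real.cos θ'| ≤ ε}

lemma S2a_meas {g₁ g₂ : ((EuclideanSpace ℝ (Fin d)) × (EuclideanSpace ℝ (Fin d))) × (EuclideanSpace ℝ (Fin d)) → EuclideanSpace ℝ (Fin d)} (hg₁ : Measurable g₁) (hg₂ : Measurable g₂) :
    MeasurableSet (S2a θ θ' ε g₁ g₂) :=
  (measurable_fst (Qtset_meas (d := d) θ θ' ε)).inter
    ((ms_ne (hg₁.comp measurable_fst) (hg₂.comp measurable_fst)).inter
      (ms_ipc (meas_nv.comp ((hg₁.comp measurable_fst).prodMk (hg₂.comp measurable_fst)))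
        measurable_snd _ _))

lemma S2b_meas {g : ((EuclideanSpace ℝ (Fin d)) × (EuclideanSpace ℝ (Fin d))) × (EuclideanSpace ℝ (Fin d)) → EuclideanSpace ℝ (Fin d)} (hg : Measurable g) : MeasurableSet (S2b θ θ' ε g) :=
  (measurable_fst (Qtset_meas (d := d) θ θ' ε)).inter
    (ms_ipc measurable_snd (hg.comp measurable_fst) _ _)

lemma S2c_meas {g : ((EuclideanSpace ℝ (Fin d)) × (EuclideanSpace ℝ (Fin d))) × (EuclideanSpace ℝ (Fin d)) → EuclideanSpace ℝ (Fin d)} (hg : Measurable g) : MeasurableSet (S2c θ θ' ε g) :=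
  (measurable_fst (Qtset_meas (d := d) θ θ' ε)).inter
    (ms_ipc (hg.comp measurable_fst) measurable_snd _ _)

lemma S1a_meas {g : ((EuclideanSpace ℝ (Fin d)) × (EuclideanSpace ℝ (Fin d))) × (EuclideanSpace ℝ (Fin d)) → EuclideanSpace ℝ (Fin d)} (hg : Measurable g) : MeasurableSet (S1a θ θ' ε g) :=
  (measurable_fst (Qtset_meas (d := d) θ θ' ε)).inter
    ((ms_ne (hg.comp measurable_fst) measurable_snd.fst).inter
      ((ms_ipc (hg.comp measurable_fst) measurable_snd.fst _ _).inter
        (ms_ipc (meas_nv.comp ((hg.comp measurable_fst).prodMk measurable_snd.fst))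
          measurable_snd.snd _ _)))

lemma S1b_meas {g : ((EuclideanSpace ℝ (Fin d)) × (EuclideanSpace ℝ (Fin d))) × (EuclideanSpace ℝ (Fin d)) → EuclideanSpace ℝ (Fin d)} (hg : Measurable g) : MeasurableSet (S1b θ θ' ε g) :=
  (measurable_fst (Qtset_meas (d := d) θ θ' ε)).inter
    ((ms_ne measurable_snd.fst (hg.comp measurable_fst)).inter
      ((ms_ipc measurable_snd.fst (hg.comp measurable_fst) _ _).inter
        (ms_ipc (meas_nv.comp (measurable_snd.fst.prodMk (hg.comp measurable_fst)))
          measurable_snd.snd _ _)))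

lemma S1c_meas {g : ((EuclideanSpace ℝ (Fin d)) × (EuclideanSpace ℝ (Fin d))) × (EuclideanSpace ℝ (Fin d)) → EuclideanSpace ℝ (Fin d)} (hg : Measurable g) : MeasurableSet (S1c θ θ' ε g) :=
  (measurable_fst (Qtset_meas (d := d) θ θ' ε)).inter
    ((ms_ne measurable_snd.fst measurable_snd.snd).inter
      ((ms_ipc measurable_snd.fst measurable_snd.snd _ _).inter
        (ms_ipc (meas_nv.comp (measurable_snd.fst.prodMk measurable_snd.snd))
          (hg.comp measurable_fst) _ _)))

end Patterns
section Patterns2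

variable (σ : Measure (EuclideanSpace ℝ (Fin d))) [IsProbabilityMeasure σ]
variable (θ θ' ε : ℝ) (u : EuclideanSpace ℝ (Fin d))
variable {Ω : Type} [MeasurableSpace Ω] (μ : Measure Ω) [IsProbabilityMeasure μ]
variable {m : ℕ} (x : Fin m → Ω → EuclideanSpace ℝ (Fin d))
variable (hrot : ∀ O : EuclideanSpace ℝ (Fin d) ≃ₗᵢ[ℝ] EuclideanSpace ℝ (Fin d),
    Measure.map ⇑O σ = σ)
variable (hsph : σ {z : EuclideanSpace ℝ (Fin d) | ‖z‖ = 1} = 1)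
variable (hxm : ∀ i, Measurable (x i))
variable (hxd : ∀ i, Measure.map (x i) μ = σ)
variable (hind : iIndepFun x μ)

include hrot hsph hxm hxd hind in
lemma pat2a {t : Fin m × Fin m × Fin m} (ht1 : t.1 ≠ t.2.1) (ht2 : t.1 ≠ t.2.2)
    (ht3 : t.2.1 ≠ t.2.2) {f : Fin m} (hf1 : f ≠ t.1) (hf2 : f ≠ t.2.1) (hf3 : f ≠ t.2.2)
    (hu : ‖u‖ = 1)
    {g₁ g₂ : ((EuclideanSpace ℝ (Fin d)) × (EuclideanSpace ℝ (Fin d))) ×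
      (EuclideanSpace ℝ (Fin d)) → EuclideanSpace ℝ (Fin d)}
    (hg₁ : Measurable g₁) (hg₂ : Measurable g₂) {a b : Fin m}
    (he₁ : ∀ ω, g₁ ((x t.1 ω, x t.2.1 ω), x t.2.2 ω) = x a ω)
    (he₂ : ∀ ω, g₂ ((x t.1 ω, x t.2.1 ω), x t.2.2 ω) = x b ω) :
    μ (Qev θ θ' ε x t ∩ {ω | x a ω ≠ x b ω ∧
        |(⟪nv (x a ω) (x b ω), x f ω⟫ : ℝ) - Real.cos θ'| ≤ ε}) ≤
      σ {z | ‖z‖ = 1 ∧ |(⟪z, u⟫ : ℝ) - Real.cos θ'| ≤ ε} *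
        ((σ.prod σ) (Pset θ ε) * σ {z | ‖z‖ = 1 ∧ |(⟪z, u⟫ : ℝ) - Real.cos θ'| ≤ ε}) := by
  have hT4 : Measurable (fun ω => (((x t.1 ω, x t.2.1 ω), x t.2.2 ω), x f ω)) :=
    (((hxm _).prodMk (hxm _)).prodMk (hxm _)).prodMk (hxm _)
  have hsub : Qev θ θ' ε x t ∩ {ω | x a ω ≠ x b ω ∧
      |(⟪nv (x a ω) (x b ω), x f ω⟫ : ℝ) - Real.cos θ'| ≤ ε} ⊆
      (fun ω => (((x t.1 ω, x t.2.1 ω), x t.2.2 ω), x f ω)) ⁻¹' S2a θ θ' ε g₁ g₂ := by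
    intro ω hω
    refine ⟨hω.1, ?_, ?_⟩
    · rw [he₁, he₂]; exact hω.2.1
    · rw [he₁, he₂]; exact hω.2.2
  refine le_trans (measure_mono hsub) ?_
  rw [← Measure.map_apply hT4 (S2a_meas θ θ' ε hg₁ hg₂),
    JL4 σ μ x hxm hxd hind ht1 ht2 ht3 hf1 hf2 hf3]
  refine le_trans (peel (K := σ {z | ‖z‖ = 1 ∧ |(⟪z, u⟫ : ℝ) - Real.cos θ'| ≤ ε}) _ _
    (S2a_meas θ θ' ε hg₁ hg₂) (Qtset_meas θ θ' ε) (fun r b h => h.1) ?_)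
    (mul_le_mul_right (QTbound σ θ θ' ε hrot hsph u hu) _)
  refine Filter.Eventually.of_forall (fun r hr => ?_)
  by_cases hne : g₁ r = g₂ r
  · have h0 : {b : EuclideanSpace ℝ (Fin d) | (r, b) ∈ S2a θ θ' ε g₁ g₂} = ∅ := by
      ext b
      simp only [S2a, Set.mem_setOf_eq, Set.mem_empty_iff_false, iff_false]
      rintro ⟨-, hgg, -⟩
      exact hgg hne
    rw [h0, measure_empty]
    exact zero_le
  · have h0 : {b : EuclideanSpace ℝ (Fin d) | (r, b) ∈ S2a θ θ' ε g₁ g₂} =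
        {z | |(⟪nv (g₁ r) (g₂ r), z⟫ : ℝ) - Real.cos θ'| ≤ ε} := by
      ext b
      simp only [S2a, Set.mem_setOf_eq, hr, hne, true_and, ne_eq, not_false_eq_true]
    rw [h0]
    exact le_of_eq (L1 σ θ' ε hrot hsph (nv_unit hne) hu)

include hrot hsph hxm hxd hind in
lemma pat2b {t : Fin m × Fin m × Fin m} (ht1 : t.1 ≠ t.2.1) (ht2 : t.1 ≠ t.2.2)
    (ht3 : t.2.1 ≠ t.2.2) {f : Fin m} (hf1 : f ≠ t.1) (hf2 : f ≠ t.2.1) (hf3 : f ≠ t.2.2)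
    (hu : ‖u‖ = 1)
    {g : ((EuclideanSpace ℝ (Fin d)) × (EuclideanSpace ℝ (Fin d))) ×
      (EuclideanSpace ℝ (Fin d)) → EuclideanSpace ℝ (Fin d)}
    (hg : Measurable g)
    (hgu : ∀ r : ((EuclideanSpace ℝ (Fin d)) × (EuclideanSpace ℝ (Fin d))) ×
      (EuclideanSpace ℝ (Fin d)), ‖r.1.1‖ = 1 → ‖r.1.2‖ = 1 → ‖r.2‖ = 1 → ‖g r‖ = 1)
    {b : Fin m}
    (he : ∀ ω, g ((x t.1 ω, x t.2.1 ω), x t.2.2 ω) = x b ω) :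
    μ (Qev θ θ' ε x t ∩ {ω | |(⟪x f ω, x b ω⟫ : ℝ) - Real.cos θ| ≤ ε}) ≤
      (σ.prod σ) (Pset θ ε) *
        ((σ.prod σ) (Pset θ ε) * σ {z | ‖z‖ = 1 ∧ |(⟪z, u⟫ : ℝ) - Real.cos θ'| ≤ ε}) := by
  have hT4 : Measurable (fun ω => (((x t.1 ω, x t.2.1 ω), x t.2.2 ω), x f ω)) :=
    (((hxm _).prodMk (hxm _)).prodMk (hxm _)).prodMk (hxm _)
  have hsub : Qev θ θ' ε x t ∩ {ω | |(⟪x f ω, x b ω⟫ : ℝ) - Real.cos θ| ≤ ε} ⊆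
      (fun ω => (((x t.1 ω, x t.2.1 ω), x t.2.2 ω), x f ω)) ⁻¹' S2b θ θ' ε g := by
    intro ω hω
    refine ⟨hω.1, ?_⟩
    rw [he]
    exact hω.2
  refine le_trans (measure_mono hsub) ?_
  rw [← Measure.map_apply hT4 (S2b_meas θ θ' ε hg),
    JL4 σ μ x hxm hxd hind ht1 ht2 ht3 hf1 hf2 hf3]
  refine le_trans (peel (K := (σ.prod σ) (Pset θ ε)) _ _
    (S2b_meas θ θ' ε hg) (Qtset_meas θ θ' ε) (fun r b h => h.1) ?_)
    (mul_le_mul_right (QTbound σ θ θ' ε hrot hsph u hu) _)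
  filter_upwards [ae_unit3 σ hsph] with r hr hmem
  have h0 : {b' : EuclideanSpace ℝ (Fin d) | (r, b') ∈ S2b θ θ' ε g} =
      {z | |(⟪z, g r⟫ : ℝ) - Real.cos θ| ≤ ε} := by
    ext b'
    simp only [S2b, Set.mem_setOf_eq, hmem, true_and]
  rw [h0]
  exact le_of_eq (L2' σ θ ε hrot hsph (hgu r hr.1 hr.2.1 hr.2.2))

include hrot hsph hxm hxd hind in
lemma pat2c {t : Fin m × Fin m × Fin m} (ht1 : t.1 ≠ t.2.1) (ht2 : t.1 ≠ t.2.2)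
    (ht3 : t.2.1 ≠ t.2.2) {f : Fin m} (hf1 : f ≠ t.1) (hf2 : f ≠ t.2.1) (hf3 : f ≠ t.2.2)
    (hu : ‖u‖ = 1)
    {g : ((EuclideanSpace ℝ (Fin d)) × (EuclideanSpace ℝ (Fin d))) ×
      (EuclideanSpace ℝ (Fin d)) → EuclideanSpace ℝ (Fin d)}
    (hg : Measurable g)
    (hgu : ∀ r : ((EuclideanSpace ℝ (Fin d)) × (EuclideanSpace ℝ (Fin d))) ×
      (EuclideanSpace ℝ (Fin d)), ‖r.1.1‖ = 1 → ‖r.1.2‖ = 1 → ‖r.2‖ = 1 → ‖g r‖ = 1)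
    {a : Fin m}
    (he : ∀ ω, g ((x t.1 ω, x t.2.1 ω), x t.2.2 ω) = x a ω) :
    μ (Qev θ θ' ε x t ∩ {ω | |(⟪x a ω, x f ω⟫ : ℝ) - Real.cos θ| ≤ ε}) ≤
      (σ.prod σ) (Pset θ ε) *
        ((σ.prod σ) (Pset θ ε) * σ {z | ‖z‖ = 1 ∧ |(⟪z, u⟫ : ℝ) - Real.cos θ'| ≤ ε}) := by
  have hT4 : Measurable (fun ω => (((x t.1 ω, x t.2.1 ω), x t.2.2 ω), x f ω)) :=
    (((hxm _).prodMk (hxm _)).prodMk (hxm _)).prodMk (hxm _)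
  have hsub : Qev θ θ' ε x t ∩ {ω | |(⟪x a ω, x f ω⟫ : ℝ) - Real.cos θ| ≤ ε} ⊆
      (fun ω => (((x t.1 ω, x t.2.1 ω), x t.2.2 ω), x f ω)) ⁻¹' S2c θ θ' ε g := by
    intro ω hω
    refine ⟨hω.1, ?_⟩
    rw [he]
    exact hω.2
  refine le_trans (measure_mono hsub) ?_
  rw [← Measure.map_apply hT4 (S2c_meas θ θ' ε hg),
    JL4 σ μ x hxm hxd hind ht1 ht2 ht3 hf1 hf2 hf3]
  refine le_trans (peel (K := (σ.prod σ) (Pset θ ε)) _ _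
    (S2c_meas θ θ' ε hg) (Qtset_meas θ θ' ε) (fun r b h => h.1) ?_)
    (mul_le_mul_right (QTbound σ θ θ' ε hrot hsph u hu) _)
  filter_upwards [ae_unit3 σ hsph] with r hr hmem
  have h0 : {b' : EuclideanSpace ℝ (Fin d) | (r, b') ∈ S2c θ θ' ε g} =
      {z | |(⟪g r, z⟫ : ℝ) - Real.cos θ| ≤ ε} := by
    ext b'
    simp only [S2c, Set.mem_setOf_eq, hmem, true_and]
  rw [h0]
  exact le_of_eq (L2 σ θ ε hrot hsph (hgu r hr.1 hr.2.1 hr.2.2))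

include hrot hsph hxm hxd hind in
lemma pat1a {t : Fin m × Fin m × Fin m} (ht1 : t.1 ≠ t.2.1) (ht2 : t.1 ≠ t.2.2)
    (ht3 : t.2.1 ≠ t.2.2) {f₁ f₂ : Fin m}
    (hf11 : f₁ ≠ t.1) (hf12 : f₁ ≠ t.2.1) (hf13 : f₁ ≠ t.2.2)
    (hf21 : f₂ ≠ t.1) (hf22 : f₂ ≠ t.2.1) (hf23 : f₂ ≠ t.2.2) (hff : f₁ ≠ f₂)
    (hu : ‖u‖ = 1)
    {g : ((EuclideanSpace ℝ (Fin d)) × (EuclideanSpace ℝ (Fin d))) ×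
      (EuclideanSpace ℝ (Fin d)) → EuclideanSpace ℝ (Fin d)}
    (hg : Measurable g)
    (hgu : ∀ r : ((EuclideanSpace ℝ (Fin d)) × (EuclideanSpace ℝ (Fin d))) ×
      (EuclideanSpace ℝ (Fin d)), ‖r.1.1‖ = 1 → ‖r.1.2‖ = 1 → ‖r.2‖ = 1 → ‖g r‖ = 1)
    {a : Fin m}
    (he : ∀ ω, g ((x t.1 ω, x t.2.1 ω), x t.2.2 ω) = x a ω) :
    μ (Qev θ θ' ε x t ∩ {ω | x a ω ≠ x f₁ ω ∧ |(⟪x a ω, x f₁ ω⟫ : ℝ) - Real.cos θ| ≤ ε ∧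
        |(⟪nv (x a ω) (x f₁ ω), x f₂ ω⟫ : ℝ) - Real.cos θ'| ≤ ε}) ≤
      ((σ.prod σ) (Pset θ ε) * σ {z | ‖z‖ = 1 ∧ |(⟪z, u⟫ : ℝ) - Real.cos θ'| ≤ ε}) *
        ((σ.prod σ) (Pset θ ε) * σ {z | ‖z‖ = 1 ∧ |(⟪z, u⟫ : ℝ) - Real.cos θ'| ≤ ε}) := by
  have hT5 : Measurable (fun ω => (((x t.1 ω, x t.2.1 ω), x t.2.2 ω), (x f₁ ω, x f₂ ω))) :=
    (((hxm _).prodMk (hxm _)).prodMk (hxm _)).prodMk ((hxm _).prodMk (hxm _))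
  have hsub : Qev θ θ' ε x t ∩ {ω | x a ω ≠ x f₁ ω ∧
      |(⟪x a ω, x f₁ ω⟫ : ℝ) - Real.cos θ| ≤ ε ∧
      |(⟪nv (x a ω) (x f₁ ω), x f₂ ω⟫ : ℝ) - Real.cos θ'| ≤ ε} ⊆
      (fun ω => (((x t.1 ω, x t.2.1 ω), x t.2.2 ω), (x f₁ ω, x f₂ ω))) ⁻¹'
        S1a θ θ' ε g := by
    intro ω hω
    refine ⟨hω.1, ?_, ?_, ?_⟩
    · rw [he]; exact hω.2.1
    · rw [he]; exact hω.2.2.1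
    · rw [he]; exact hω.2.2.2
  refine le_trans (measure_mono hsub) ?_
  rw [← Measure.map_apply hT5 (S1a_meas θ θ' ε hg),
    JL5 σ μ x hxm hxd hind ht1 ht2 ht3 hf11 hf12 hf13 hf21 hf22 hf23 hff]
  refine le_trans (peel (K := (σ.prod σ) (Pset θ ε) *
      σ {z | ‖z‖ = 1 ∧ |(⟪z, u⟫ : ℝ) - Real.cos θ'| ≤ ε}) _ _
    (S1a_meas θ θ' ε hg) (Qtset_meas θ θ' ε) (fun r b h => h.1) ?_)
    (mul_le_mul_right (QTbound σ θ θ' ε hrot hsph u hu) _)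
  filter_upwards [ae_unit3 σ hsph] with r hr hmem
  have h0 : {b' : (EuclideanSpace ℝ (Fin d)) × (EuclideanSpace ℝ (Fin d)) |
      (r, b') ∈ S1a θ θ' ε g} =
      {q : (EuclideanSpace ℝ (Fin d)) × (EuclideanSpace ℝ (Fin d)) |
        g r ≠ q.1 ∧ |(⟪g r, q.1⟫ : ℝ) - Real.cos θ| ≤ ε ∧
        |(⟪nv (g r) q.1, q.2⟫ : ℝ) - Real.cos θ'| ≤ ε} := by
    ext b'
    simp only [S1a, Set.mem_setOf_eq, hmem, true_and]
  rw [h0]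
  exact L4a σ θ θ' ε hrot hsph u (hgu r hr.1 hr.2.1 hr.2.2) hu

include hrot hsph hxm hxd hind in
lemma pat1b {t : Fin m × Fin m × Fin m} (ht1 : t.1 ≠ t.2.1) (ht2 : t.1 ≠ t.2.2)
    (ht3 : t.2.1 ≠ t.2.2) {f₁ f₂ : Fin m}
    (hf11 : f₁ ≠ t.1) (hf12 : f₁ ≠ t.2.1) (hf13 : f₁ ≠ t.2.2)
    (hf21 : f₂ ≠ t.1) (hf22 : f₂ ≠ t.2.1) (hf23 : f₂ ≠ t.2.2) (hff : f₁ ≠ f₂)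
    (hu : ‖u‖ = 1)
    {g : ((EuclideanSpace ℝ (Fin d)) × (EuclideanSpace ℝ (Fin d))) ×
      (EuclideanSpace ℝ (Fin d)) → EuclideanSpace ℝ (Fin d)}
    (hg : Measurable g)
    (hgu : ∀ r : ((EuclideanSpace ℝ (Fin d)) × (EuclideanSpace ℝ (Fin d))) ×
      (EuclideanSpace ℝ (Fin d)), ‖r.1.1‖ = 1 → ‖r.1.2‖ = 1 → ‖r.2‖ = 1 → ‖g r‖ = 1)
    {b : Fin m}
    (he : ∀ ω, g ((x t.1 ω, x t.2.1 ω), x t.2.2 ω) = x b ω) :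
    μ (Qev θ θ' ε x t ∩ {ω | x f₁ ω ≠ x b ω ∧ |(⟪x f₁ ω, x b ω⟫ : ℝ) - Real.cos θ| ≤ ε ∧
        |(⟪nv (x f₁ ω) (x b ω), x f₂ ω⟫ : ℝ) - Real.cos θ'| ≤ ε}) ≤
      ((σ.prod σ) (Pset θ ε) * σ {z | ‖z‖ = 1 ∧ |(⟪z, u⟫ : ℝ) - Real.cos θ'| ≤ ε}) *
        ((σ.prod σ) (Pset θ ε) * σ {z | ‖z‖ = 1 ∧ |(⟪z, u⟫ : ℝ) - Real.cos θ'| ≤ ε}) := by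
  have hT5 : Measurable (fun ω => (((x t.1 ω, x t.2.1 ω), x t.2.2 ω), (x f₁ ω, x f₂ ω))) :=
    (((hxm _).prodMk (hxm _)).prodMk (hxm _)).prodMk ((hxm _).prodMk (hxm _))
  have hsub : Qev θ θ' ε x t ∩ {ω | x f₁ ω ≠ x b ω ∧
      |(⟪x f₁ ω, x b ω⟫ : ℝ) - Real.cos θ| ≤ ε ∧
      |(⟪nv (x f₁ ω) (x b ω), x f₂ ω⟫ : ℝ) - Real.cos θ'| ≤ ε} ⊆
      (fun ω => (((x t.1 ω, x t.2.1 ω), x t.2.2 ω), (x f₁ ω, x f₂ ω))) ⁻¹'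
        S1b θ θ' ε g := by
    intro ω hω
    refine ⟨hω.1, ?_, ?_, ?_⟩
    · rw [he]; exact hω.2.1
    · rw [he]; exact hω.2.2.1
    · rw [he]; exact hω.2.2.2
  refine le_trans (measure_mono hsub) ?_
  rw [← Measure.map_apply hT5 (S1b_meas θ θ' ε hg),
    JL5 σ μ x hxm hxd hind ht1 ht2 ht3 hf11 hf12 hf13 hf21 hf22 hf23 hff]
  refine le_trans (peel (K := (σ.prod σ) (Pset θ ε) *
      σ {z | ‖z‖ = 1 ∧ |(⟪z, u⟫ : ℝ) - Real.cos θ'| ≤ ε}) _ _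
    (S1b_meas θ θ' ε hg) (Qtset_meas θ θ' ε) (fun r b h => h.1) ?_)
    (mul_le_mul_right (QTbound σ θ θ' ε hrot hsph u hu) _)
  filter_upwards [ae_unit3 σ hsph] with r hr hmem
  have h0 : {b' : (EuclideanSpace ℝ (Fin d)) × (EuclideanSpace ℝ (Fin d)) |
      (r, b') ∈ S1b θ θ' ε g} =
      {q : (EuclideanSpace ℝ (Fin d)) × (EuclideanSpace ℝ (Fin d)) |
        q.1 ≠ g r ∧ |(⟪q.1, g r⟫ : ℝ) - Real.cos θ| ≤ ε ∧
        |(⟪nv q.1 (g r), q.2⟫ : ℝ) - Real.cos θ'| ≤ ε} := by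
    ext b'
    simp only [S1b, Set.mem_setOf_eq, hmem, true_and]
  rw [h0]
  exact L4b σ θ θ' ε hrot hsph u (hgu r hr.1 hr.2.1 hr.2.2) hu

include hrot hsph hxm hxd hind in
lemma pat1c {t : Fin m × Fin m × Fin m} (ht1 : t.1 ≠ t.2.1) (ht2 : t.1 ≠ t.2.2)
    (ht3 : t.2.1 ≠ t.2.2) {f₁ f₂ : Fin m}
    (hf11 : f₁ ≠ t.1) (hf12 : f₁ ≠ t.2.1) (hf13 : f₁ ≠ t.2.2)
    (hf21 : f₂ ≠ t.1) (hf22 : f₂ ≠ t.2.1) (hf23 : f₂ ≠ t.2.2) (hff : f₁ ≠ f₂)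
    (hu : ‖u‖ = 1)
    {g : ((EuclideanSpace ℝ (Fin d)) × (EuclideanSpace ℝ (Fin d))) ×
      (EuclideanSpace ℝ (Fin d)) → EuclideanSpace ℝ (Fin d)}
    (hg : Measurable g)
    (hgu : ∀ r : ((EuclideanSpace ℝ (Fin d)) × (EuclideanSpace ℝ (Fin d))) ×
      (EuclideanSpace ℝ (Fin d)), ‖r.1.1‖ = 1 → ‖r.1.2‖ = 1 → ‖r.2‖ = 1 → ‖g r‖ = 1)
    {c : Fin m}
    (he : ∀ ω, g ((x t.1 ω, x t.2.1 ω), x t.2.2 ω) = x c ω) :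
    μ (Qev θ θ' ε x t ∩ {ω | x f₁ ω ≠ x f₂ ω ∧ |(⟪x f₁ ω, x f₂ ω⟫ : ℝ) - Real.cos θ| ≤ ε ∧
        |(⟪nv (x f₁ ω) (x f₂ ω), x c ω⟫ : ℝ) - Real.cos θ'| ≤ ε}) ≤
      ((σ.prod σ) (Pset θ ε) * σ {z | ‖z‖ = 1 ∧ |(⟪z, u⟫ : ℝ) - Real.cos θ'| ≤ ε}) *
        ((σ.prod σ) (Pset θ ε) * σ {z | ‖z‖ = 1 ∧ |(⟪z, u⟫ : ℝ) - Real.cos θ'| ≤ ε}) := by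
  have hT5 : Measurable (fun ω => (((x t.1 ω, x t.2.1 ω), x t.2.2 ω), (x f₁ ω, x f₂ ω))) :=
    (((hxm _).prodMk (hxm _)).prodMk (hxm _)).prodMk ((hxm _).prodMk (hxm _))
  have hsub : Qev θ θ' ε x t ∩ {ω | x f₁ ω ≠ x f₂ ω ∧
      |(⟪x f₁ ω, x f₂ ω⟫ : ℝ) - Real.cos θ| ≤ ε ∧
      |(⟪nv (x f₁ ω) (x f₂ ω), x c ω⟫ : ℝ) - Real.cos θ'| ≤ ε} ⊆
      (fun ω => (((x t.1 ω, x t.2.1 ω), x t.2.2 ω), (x f₁ ω, x f₂ ω))) ⁻¹'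
        S1c θ θ' ε g := by
    intro ω hω
    refine ⟨hω.1, hω.2.1, hω.2.2.1, ?_⟩
    rw [he]
    exact hω.2.2.2
  refine le_trans (measure_mono hsub) ?_
  rw [← Measure.map_apply hT5 (S1c_meas θ θ' ε hg),
    JL5 σ μ x hxm hxd hind ht1 ht2 ht3 hf11 hf12 hf13 hf21 hf22 hf23 hff]
  refine le_trans (peel (K := (σ.prod σ) (Pset θ ε) *
      σ {z | ‖z‖ = 1 ∧ |(⟪z, u⟫ : ℝ) - Real.cos θ'| ≤ ε}) _ _
    (S1c_meas θ θ' ε hg) (Qtset_meas θ θ' ε) (fun r b h => h.1) ?_)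
    (mul_le_mul_right (QTbound σ θ θ' ε hrot hsph u hu) _)
  filter_upwards [ae_unit3 σ hsph] with r hr hmem
  have h0 : {b' : (EuclideanSpace ℝ (Fin d)) × (EuclideanSpace ℝ (Fin d)) |
      (r, b') ∈ S1c θ θ' ε g} = Fset θ θ' ε (g r) := by
    ext b'
    simp only [S1c, Fset, Set.mem_setOf_eq, hmem, true_and]
  rw [h0]
  exact L3 σ θ θ' ε hrot hsph u (hgu r hr.1 hr.2.1 hr.2.2) hu

end Patterns2
section Indep0

variable (σ : Measure (EuclideanSpace ℝ (Fin d))) [IsProbabilityMeasure σ]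
variable (θ θ' ε : ℝ)
variable {Ω : Type} [MeasurableSpace Ω] (μ : Measure Ω) [IsProbabilityMeasure μ]
variable {m : ℕ} (x : Fin m → Ω → EuclideanSpace ℝ (Fin d))
variable (hxm : ∀ i, Measurable (x i))
variable (hind : iIndepFun x μ)

include hxm hind in
lemma indep_zero {t s : Fin m × Fin m × Fin m}
    (h1 : s.1 ∉ ({t.1, t.2.1, t.2.2} : Finset (Fin m)))
    (h2 : s.2.1 ∉ ({t.1, t.2.1, t.2.2} : Finset (Fin m)))
    (h3 : s.2.2 ∉ ({t.1, t.2.1, t.2.2} : Finset (Fin m))) :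
    μ (Qev θ θ' ε x t ∩ Qev θ θ' ε x s) = μ (Qev θ θ' ε x t) * μ (Qev θ θ' ε x s) := by
  classical
  have hdisj : Disjoint ({t.1, t.2.1, t.2.2} : Finset (Fin m))
      ({s.1, s.2.1, s.2.2} : Finset (Fin m)) := by
    rw [Finset.disjoint_right]
    intro a ha
    simp only [Finset.mem_insert, Finset.mem_singleton] at ha
    rcases ha with h | h | h <;> subst h
    · exact h1
    · exact h2
    · exact h3
  have hs1 : s.1 ∈ ({s.1, s.2.1, s.2.2} : Finset (Fin m)) := by simp
  have hs2 : s.2.1 ∈ ({s.1, s.2.1, s.2.2} : Finset (Fin m)) := by simp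
  have hs3 : s.2.2 ∈ ({s.1, s.2.1, s.2.2} : Finset (Fin m)) := by simp
  have h : IndepFun (fun ω => ((x t.1 ω, x t.2.1 ω), x t.2.2 ω))
      (fun ω => ((x s.1 ω, x s.2.1 ω), x s.2.2 ω)) μ :=
    indepT3 μ x hxm hind hdisj
      (fun g => ((g ⟨s.1, hs1⟩, g ⟨s.2.1, hs2⟩), g ⟨s.2.2, hs3⟩))
      (((measurable_pi_apply _).prodMk (measurable_pi_apply _)).prodMk
        (measurable_pi_apply _))
  rw [Qev_preim θ θ' ε x t, Qev_preim θ θ' ε x s]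
  exact h.measure_inter_preimage_eq_mul _ _ (Qtset_meas θ θ' ε) (Qtset_meas θ θ' ε)

end Indep0
section Count

lemma selector {Ω : Type} {m : ℕ} (x : Fin m → Ω → EuclideanSpace ℝ (Fin d))
    {t : Fin m × Fin m × Fin m} {y : Fin m}
    (hy : y ∈ ({t.1, t.2.1, t.2.2} : Finset (Fin m))) :
    ∃ g : ((EuclideanSpace ℝ (Fin d)) × (EuclideanSpace ℝ (Fin d))) ×
      (EuclideanSpace ℝ (Fin d)) → EuclideanSpace ℝ (Fin d), Measurable g ∧
      (∀ r : ((EuclideanSpace ℝ (Fin d)) × (EuclideanSpace ℝ (Fin d))) ×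
        (EuclideanSpace ℝ (Fin d)), ‖r.1.1‖ = 1 → ‖r.1.2‖ = 1 → ‖r.2‖ = 1 → ‖g r‖ = 1) ∧
      (∀ ω, g ((x t.1 ω, x t.2.1 ω), x t.2.2 ω) = x y ω) := by
  simp only [Finset.mem_insert, Finset.mem_singleton] at hy
  rcases hy with h | h | h <;> subst h
  · exact ⟨fun r => r.1.1, measurable_fst.fst, fun r h1 _ _ => h1, fun ω => rfl⟩
  · exact ⟨fun r => r.1.2, measurable_fst.snd, fun r _ h2 _ => h2, fun ω => rfl⟩
  · exact ⟨fun r => r.2, measurable_snd, fun r _ _ h3 => h3, fun ω => rfl⟩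

lemma mem_idx {m : ℕ} {t : Fin m × Fin m × Fin m} {y : Fin m}
    (h : y ∈ ({t.1, t.2.1, t.2.2} : Finset (Fin m))) :
    ∃ a : Fin 3, ![t.1, t.2.1, t.2.2] a = y := by
  simp only [Finset.mem_insert, Finset.mem_singleton] at h
  rcases h with h | h | h
  · exact ⟨0, h.symm⟩
  · exact ⟨1, h.symm⟩
  · exact ⟨2, h.symm⟩

lemma count3 {m : ℕ} :
    (Finset.univ.filter (fun q : (Fin m × Fin m × Fin m) × (Fin m × Fin m × Fin m) =>
      q.2.1 ∈ ({q.1.1, q.1.2.1, q.1.2.2} : Finset (Fin m)) ∧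
      q.2.2.1 ∈ ({q.1.1, q.1.2.1, q.1.2.2} : Finset (Fin m)) ∧
      q.2.2.2 ∈ ({q.1.1, q.1.2.1, q.1.2.2} : Finset (Fin m)))).card ≤ 27 * m ^ 3 := by
  classical
  set f : (Fin m × Fin m × Fin m) × (Fin 3 × Fin 3 × Fin 3) →
      (Fin m × Fin m × Fin m) × (Fin m × Fin m × Fin m) :=
    fun z => (z.1, (![z.1.1, z.1.2.1, z.1.2.2] z.2.1, ![z.1.1, z.1.2.1, z.1.2.2] z.2.2.1,
      ![z.1.1, z.1.2.1, z.1.2.2] z.2.2.2)) with hf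
  have hsub : (Finset.univ.filter (fun q : (Fin m × Fin m × Fin m) × (Fin m × Fin m × Fin m) =>
      q.2.1 ∈ ({q.1.1, q.1.2.1, q.1.2.2} : Finset (Fin m)) ∧
      q.2.2.1 ∈ ({q.1.1, q.1.2.1, q.1.2.2} : Finset (Fin m)) ∧
      q.2.2.2 ∈ ({q.1.1, q.1.2.1, q.1.2.2} : Finset (Fin m)))) ⊆
      Finset.image f Finset.univ := by
    intro q hq
    simp only [Finset.mem_filter] at hq
    obtain ⟨a, ha⟩ := mem_idx hq.2.1
    obtain ⟨b, hb⟩ := mem_idx hq.2.2.1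
    obtain ⟨c, hc⟩ := mem_idx hq.2.2.2
    refine Finset.mem_image.mpr ⟨(q.1, (a, b, c)), Finset.mem_univ _, ?_⟩
    simp only [hf, ha, hb, hc]
  calc (Finset.univ.filter _).card ≤ (Finset.image f Finset.univ).card :=
        Finset.card_le_card hsub
    _ ≤ (Finset.univ : Finset ((Fin m × Fin m × Fin m) × (Fin 3 × Fin 3 × Fin 3))).card :=
        Finset.card_image_le
    _ = 27 * m ^ 3 := by
        simp [Fintype.card_prod, Fintype.card_fin]
        ring

lemma count2 {m : ℕ} :
    (Finset.univ.filter (fun q : (Fin m × Fin m × Fin m) × (Fin m × Fin m × Fin m) =>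
      (q.2.1 ∈ ({q.1.1, q.1.2.1, q.1.2.2} : Finset (Fin m)) ∧
        q.2.2.1 ∈ ({q.1.1, q.1.2.1, q.1.2.2} : Finset (Fin m))) ∨
      (q.2.1 ∈ ({q.1.1, q.1.2.1, q.1.2.2} : Finset (Fin m)) ∧
        q.2.2.2 ∈ ({q.1.1, q.1.2.1, q.1.2.2} : Finset (Fin m))) ∨
      (q.2.2.1 ∈ ({q.1.1, q.1.2.1, q.1.2.2} : Finset (Fin m)) ∧
        q.2.2.2 ∈ ({q.1.1, q.1.2.1, q.1.2.2} : Finset (Fin m))))).card ≤ 27 * m ^ 4 := by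
  classical
  set g1 : (Fin m × Fin m × Fin m) × (Fin 3 × Fin 3 × Fin m) →
      (Fin m × Fin m × Fin m) × (Fin m × Fin m × Fin m) :=
    fun z => (z.1, (![z.1.1, z.1.2.1, z.1.2.2] z.2.1, ![z.1.1, z.1.2.1, z.1.2.2] z.2.2.1,
      z.2.2.2)) with hg1
  set g2 : (Fin m × Fin m × Fin m) × (Fin 3 × Fin 3 × Fin m) →
      (Fin m × Fin m × Fin m) × (Fin m × Fin m × Fin m) :=
    fun z => (z.1, (![z.1.1, z.1.2.1, z.1.2.2] z.2.1, z.2.2.2,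
      ![z.1.1, z.1.2.1, z.1.2.2] z.2.2.1)) with hg2
  set g3 : (Fin m × Fin m × Fin m) × (Fin 3 × Fin 3 × Fin m) →
      (Fin m × Fin m × Fin m) × (Fin m × Fin m × Fin m) :=
    fun z => (z.1, (z.2.2.2, ![z.1.1, z.1.2.1, z.1.2.2] z.2.1,
      ![z.1.1, z.1.2.1, z.1.2.2] z.2.2.1)) with hg3
  have hsub : (Finset.univ.filter (fun q : (Fin m × Fin m × Fin m) × (Fin m × Fin m × Fin m) =>
      (q.2.1 ∈ ({q.1.1, q.1.2.1, q.1.2.2} : Finset (Fin m)) ∧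
        q.2.2.1 ∈ ({q.1.1, q.1.2.1, q.1.2.2} : Finset (Fin m))) ∨
      (q.2.1 ∈ ({q.1.1, q.1.2.1, q.1.2.2} : Finset (Fin m)) ∧
        q.2.2.2 ∈ ({q.1.1, q.1.2.1, q.1.2.2} : Finset (Fin m))) ∨
      (q.2.2.1 ∈ ({q.1.1, q.1.2.1, q.1.2.2} : Finset (Fin m)) ∧
        q.2.2.2 ∈ ({q.1.1, q.1.2.1, q.1.2.2} : Finset (Fin m))))) ⊆
      (Finset.image g1 Finset.univ ∪ Finset.image g2 Finset.univ ∪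
        Finset.image g3 Finset.univ) := by
    intro q hq
    simp only [Finset.mem_filter] at hq
    rcases hq.2 with ⟨h1, h2⟩ | ⟨h1, h2⟩ | ⟨h1, h2⟩
    · obtain ⟨a, ha⟩ := mem_idx h1
      obtain ⟨b, hb⟩ := mem_idx h2
      refine Finset.mem_union.mpr (Or.inl (Finset.mem_union.mpr (Or.inl
        (Finset.mem_image.mpr ⟨(q.1, (a, b, q.2.2.2)), Finset.mem_univ _, ?_⟩))))
      simp only [hg1, ha, hb]
    · obtain ⟨a, ha⟩ := mem_idx h1
      obtain ⟨b, hb⟩ := mem_idx h2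
      refine Finset.mem_union.mpr (Or.inl (Finset.mem_union.mpr (Or.inr
        (Finset.mem_image.mpr ⟨(q.1, (a, b, q.2.2.1)), Finset.mem_univ _, ?_⟩))))
      simp only [hg2, ha, hb]
    · obtain ⟨a, ha⟩ := mem_idx h1
      obtain ⟨b, hb⟩ := mem_idx h2
      refine Finset.mem_union.mpr (Or.inr
        (Finset.mem_image.mpr ⟨(q.1, (a, b, q.2.1)), Finset.mem_univ _, ?_⟩))
      simp only [hg3, ha, hb]
  calc (Finset.univ.filter _).card ≤ _ := Finset.card_le_card hsub
    _ ≤ (Finset.image g1 Finset.univ ∪ Finset.image g2 Finset.univ).card +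
        (Finset.image g3 Finset.univ).card := Finset.card_union_le _ _
    _ ≤ ((Finset.image g1 Finset.univ).card + (Finset.image g2 Finset.univ).card) +
        (Finset.image g3 Finset.univ).card := by
        exact Nat.add_le_add_right (Finset.card_union_le _ _) _
    _ ≤ 27 * m ^ 4 := by
        have h1 := Finset.card_image_le (f := g1) (s := Finset.univ)
        have h2 := Finset.card_image_le (f := g2) (s := Finset.univ)
        have h3 := Finset.card_image_le (f := g3) (s := Finset.univ)
        have hc : (Finset.univ : Finset ((Fin m × Fin m × Fin m) ×
            (Fin 3 × Fin 3 × Fin m))).card = 9 * m ^ 4 := by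
          simp [Fintype.card_prod, Fintype.card_fin]
          ring
        rw [hc] at h1 h2 h3
        omega

lemma count1 {m : ℕ} :
    (Finset.univ.filter (fun q : (Fin m × Fin m × Fin m) × (Fin m × Fin m × Fin m) =>
      q.2.1 ∈ ({q.1.1, q.1.2.1, q.1.2.2} : Finset (Fin m)) ∨
      q.2.2.1 ∈ ({q.1.1, q.1.2.1, q.1.2.2} : Finset (Fin m)) ∨
      q.2.2.2 ∈ ({q.1.1, q.1.2.1, q.1.2.2} : Finset (Fin m)))).card ≤ 27 * m ^ 5 := by
  classical
  set g1 : (Fin m × Fin m × Fin m) × (Fin 3 × Fin m × Fin m) →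
      (Fin m × Fin m × Fin m) × (Fin m × Fin m × Fin m) :=
    fun z => (z.1, (![z.1.1, z.1.2.1, z.1.2.2] z.2.1, z.2.2.1, z.2.2.2)) with hg1
  set g2 : (Fin m × Fin m × Fin m) × (Fin 3 × Fin m × Fin m) →
      (Fin m × Fin m × Fin m) × (Fin m × Fin m × Fin m) :=
    fun z => (z.1, (z.2.2.1, ![z.1.1, z.1.2.1, z.1.2.2] z.2.1, z.2.2.2)) with hg2
  set g3 : (Fin m × Fin m × Fin m) × (Fin 3 × Fin m × Fin m) →
      (Fin m × Fin m × Fin m) × (Fin m × Fin m × Fin m) :=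
    fun z => (z.1, (z.2.2.1, z.2.2.2, ![z.1.1, z.1.2.1, z.1.2.2] z.2.1)) with hg3
  have hsub : (Finset.univ.filter (fun q : (Fin m × Fin m × Fin m) × (Fin m × Fin m × Fin m) =>
      q.2.1 ∈ ({q.1.1, q.1.2.1, q.1.2.2} : Finset (Fin m)) ∨
      q.2.2.1 ∈ ({q.1.1, q.1.2.1, q.1.2.2} : Finset (Fin m)) ∨
      q.2.2.2 ∈ ({q.1.1, q.1.2.1, q.1.2.2} : Finset (Fin m)))) ⊆
      (Finset.image g1 Finset.univ ∪ Finset.image g2 Finset.univ ∪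
        Finset.image g3 Finset.univ) := by
    intro q hq
    simp only [Finset.mem_filter] at hq
    rcases hq.2 with h | h | h
    · obtain ⟨a, ha⟩ := mem_idx h
      refine Finset.mem_union.mpr (Or.inl (Finset.mem_union.mpr (Or.inl
        (Finset.mem_image.mpr ⟨(q.1, (a, q.2.2.1, q.2.2.2)), Finset.mem_univ _, ?_⟩))))
      simp only [hg1, ha]
    · obtain ⟨a, ha⟩ := mem_idx h
      refine Finset.mem_union.mpr (Or.inl (Finset.mem_union.mpr (Or.inr
        (Finset.mem_image.mpr ⟨(q.1, (a, q.2.1, q.2.2.2)), Finset.mem_univ _, ?_⟩))))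
      simp only [hg2, ha]
    · obtain ⟨a, ha⟩ := mem_idx h
      refine Finset.mem_union.mpr (Or.inr
        (Finset.mem_image.mpr ⟨(q.1, (a, q.2.1, q.2.2.1)), Finset.mem_univ _, ?_⟩))
      simp only [hg3, ha]
  calc (Finset.univ.filter _).card ≤ _ := Finset.card_le_card hsub
    _ ≤ (Finset.image g1 Finset.univ ∪ Finset.image g2 Finset.univ).card +
        (Finset.image g3 Finset.univ).card := Finset.card_union_le _ _
    _ ≤ ((Finset.image g1 Finset.univ).card + (Finset.image g2 Finset.univ).card) +
        (Finset.image g3 Finset.univ).card := by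
        exact Nat.add_le_add_right (Finset.card_union_le _ _) _
    _ ≤ 27 * m ^ 5 := by
        have h1 := Finset.card_image_le (f := g1) (s := Finset.univ)
        have h2 := Finset.card_image_le (f := g2) (s := Finset.univ)
        have h3 := Finset.card_image_le (f := g3) (s := Finset.univ)
        have hc : (Finset.univ : Finset ((Fin m × Fin m × Fin m) ×
            (Fin 3 × Fin m × Fin m))).card = 3 * m ^ 5 := by
          simp [Fintype.card_prod, Fintype.card_fin]
          ring
        rw [hc] at h1 h2 h3
        omega

end Count

lemma iteZero_nonneg {c : Prop} [Decidable c] {v : ℝ} (h : 0 ≤ v) :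
    0 ≤ if c then v else 0 := by
  split_ifs
  · exact h
  · exact le_rfl

lemma sum_ite_const_le {α : Type*} [Fintype α] (P : α → Prop) [DecidablePred P] (v : ℝ)
    (hv : 0 ≤ v) (N : ℕ) (hN : (Finset.univ.filter P).card ≤ N) :
    (∑ q : α, if P q then v else 0) ≤ (N : ℝ) * v := by
  rw [Finset.sum_ite, Finset.sum_const, Finset.sum_const_zero, add_zero, nsmul_eq_mul]
  exact mul_le_mul_of_nonneg_right (by exact_mod_cast hN) hv

lemma not_mem_triple {m : ℕ} {t : Fin m × Fin m × Fin m} {y : Fin m}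
    (hy : y ∉ ({t.1, t.2.1, t.2.2} : Finset (Fin m))) :
    y ≠ t.1 ∧ y ≠ t.2.1 ∧ y ≠ t.2.2 := by
  simp only [Finset.mem_insert, Finset.mem_singleton, not_or] at hy
  exact hy

end VT


/-- Second-moment bound for the number `Z` of ordered solution triples of the 3-list problem:
there is an absolute constant `C > 0` such that
`Var(Z) ≤ C·(m³pp′ + m⁴p²p′ + m⁴pp′² + m⁵p²p′²)`. -/
theorem variance_of_number_of_triples :
    ∃ C : ℝ, 0 < C ∧
      ∀ (d m : ℕ), 2 ≤ d → 3 ≤ m →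
      ∀ (θ θ' ε : ℝ), 0 ≤ ε →
      ∀ (σ : Measure (EuclideanSpace ℝ (Fin d))), IsUniformSphereMeasure d σ →
      ∀ (u : EuclideanSpace ℝ (Fin d)), ‖u‖ = 1 →
      ∀ (p p' : ℝ),
        p = ((σ.prod σ) {q : EuclideanSpace ℝ (Fin d) × EuclideanSpace ℝ (Fin d) |
          ‖q.1‖ = 1 ∧ ‖q.2‖ = 1 ∧ |⟪q.1, q.2⟫ - Real.cos θ| ≤ ε}).toReal →
        p' = (σ {z | ‖z‖ = 1 ∧ |⟪z, u⟫ - Real.cos θ'| ≤ ε}).toReal →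
      ∀ (Ω : Type) (_ : MeasurableSpace Ω) (μ : Measure Ω), IsProbabilityMeasure μ →
      ∀ (x : Fin m → Ω → EuclideanSpace ℝ (Fin d)),
        (∀ i, Measurable (x i)) →
        (∀ i, Measure.map (x i) μ = σ) →
        iIndepFun x μ →
        variance (fun ω => ((Finset.univ.filter (fun t : Fin m × Fin m × Fin m =>
            t.1 ≠ t.2.1 ∧ t.1 ≠ t.2.2 ∧ t.2.1 ≠ t.2.2 ∧
            x t.1 ω ≠ x t.2.1 ω ∧
            |⟪x t.1 ω, x t.2.1 ω⟫ - Real.cos θ| ≤ ε ∧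
            |⟪‖x t.1 ω - x t.2.1 ω‖⁻¹ • (x t.1 ω - x t.2.1 ω), x t.2.2 ω⟫ - Real.cos θ'| ≤ ε)).card : ℝ)) μ
          ≤ C * ((m : ℝ) ^ 3 * p * p' + (m : ℝ) ^ 4 * p ^ 2 * p' +
              (m : ℝ) ^ 4 * p * p' ^ 2 + (m : ℝ) ^ 5 * p ^ 2 * p' ^ 2) := by
  classical
  refine ⟨27, by norm_num, ?_⟩
  intro d m hd hm θ θ' ε hε σ hσ u hu p p' hp hp' Ω mΩ μ hμ x hxm hxd hind
  obtain ⟨hprob, hsph0, hrot⟩ := hσ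
  haveI := hprob
  haveI := hμ
  have hsph : σ {z : EuclideanSpace ℝ (Fin d) | ‖z‖ = 1} = 1 := by
    rw [← hsph0]
    congr 1
    ext z
    rw [Set.mem_setOf_eq, mem_sphere_zero_iff_norm]
  -- abbreviations
  have hp2 : p = ((σ.prod σ) (Pset θ ε)).toReal := hp
  have hp'2 : p' = (σ {z | ‖z‖ = 1 ∧ |(⟪z, u⟫ : ℝ) - Real.cos θ'| ≤ ε}).toReal := hp'
  have hp0 : 0 ≤ p := hp2 ▸ ENNReal.toReal_nonneg
  have hp'0 : 0 ≤ p' := hp'2 ▸ ENNReal.toReal_nonneg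
  have hPne : (σ.prod σ) (Pset θ ε) ≠ ⊤ := measure_ne_top _ _
  have hP'ne : σ {z | ‖z‖ = 1 ∧ |(⟪z, u⟫ : ℝ) - Real.cos θ'| ≤ ε} ≠ ⊤ := measure_ne_top _ _
  have hPP'ne : (σ.prod σ) (Pset θ ε) *
      σ {z | ‖z‖ = 1 ∧ |(⟪z, u⟫ : ℝ) - Real.cos θ'| ≤ ε} ≠ ⊤ :=
    ENNReal.mul_ne_top hPne hP'ne
  have htr1 : ((σ.prod σ) (Pset θ ε) *
      σ {z | ‖z‖ = 1 ∧ |(⟪z, u⟫ : ℝ) - Real.cos θ'| ≤ ε}).toReal = p * p' := by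
    rw [ENNReal.toReal_mul, ← hp2, ← hp'2]
  -- the events
  set Q : (Fin m × Fin m × Fin m) → Set Ω := fun t =>
    {ω | t.1 ≠ t.2.1 ∧ t.1 ≠ t.2.2 ∧ t.2.1 ≠ t.2.2 ∧ ω ∈ Qev θ θ' ε x t} with hQdef
  have hQempty : ∀ t : Fin m × Fin m × Fin m,
      ¬(t.1 ≠ t.2.1 ∧ t.1 ≠ t.2.2 ∧ t.2.1 ≠ t.2.2) → Q t = ∅ := by
    intro t ht
    ext ω
    simp only [hQdef, Set.mem_setOf_eq, Set.mem_empty_iff_false, iff_false]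
    intro h
    exact ht ⟨h.1, h.2.1, h.2.2.1⟩
  have hQeq : ∀ t : Fin m × Fin m × Fin m,
      (t.1 ≠ t.2.1 ∧ t.1 ≠ t.2.2 ∧ t.2.1 ≠ t.2.2) → Q t = Qev θ θ' ε x t := by
    intro t ht
    ext ω
    simp only [hQdef, Set.mem_setOf_eq]
    exact ⟨fun h => h.2.2.2, fun h => ⟨ht.1, ht.2.1, ht.2.2, h⟩⟩
  have hQm : ∀ t, MeasurableSet (Q t) := by
    intro t
    by_cases ht : t.1 ≠ t.2.1 ∧ t.1 ≠ t.2.2 ∧ t.2.1 ≠ t.2.2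
    · rw [hQeq t ht]
      exact Qev_meas θ θ' ε x hxm t
    · rw [hQempty t ht]
      exact MeasurableSet.empty
  -- rewrite the random variable as a sum of indicators
  have hZfun : (fun ω => ((Finset.univ.filter (fun t : Fin m × Fin m × Fin m =>
      t.1 ≠ t.2.1 ∧ t.1 ≠ t.2.2 ∧ t.2.1 ≠ t.2.2 ∧
      x t.1 ω ≠ x t.2.1 ω ∧
      |⟪x t.1 ω, x t.2.1 ω⟫ - Real.cos θ| ≤ ε ∧
      |⟪‖x t.1 ω - x t.2.1 ω‖⁻¹ • (x t.1 ω - x t.2.1 ω), x t.2.2 ω⟫ - Real.cos θ'| ≤ ε)).card : ℝ)) =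
      fun ω => ∑ t : Fin m × Fin m × Fin m, Set.indicator (Q t) (fun _ => (1 : ℝ)) ω := by
    funext ω
    rw [Finset.card_filter]
    push_cast
    refine Finset.sum_congr rfl (fun t _ => ?_)
    by_cases h : ω ∈ Q t
    · rw [Set.indicator_of_mem h, if_pos]
      exact h
    · rw [Set.indicator_of_notMem h, if_neg]
      exact h
  rw [hZfun]
  -- moment computations
  have hIndm : ∀ t : Fin m × Fin m × Fin m,
      Measurable (Set.indicator (Q t) (fun _ => (1 : ℝ))) :=
    fun t => measurable_const.indicator (hQm t)
  have hZmeas : Measurable (fun ω => ∑ t : Fin m × Fin m × Fin m,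
      Set.indicator (Q t) (fun _ => (1 : ℝ)) ω) :=
    Finset.measurable_sum _ (fun t _ => hIndm t)
  have hZbd : ∀ ω, ‖∑ t : Fin m × Fin m × Fin m,
      Set.indicator (Q t) (fun _ => (1 : ℝ)) ω‖ ≤
      (Fintype.card (Fin m × Fin m × Fin m) : ℝ) := by
    intro ω
    calc ‖∑ t : Fin m × Fin m × Fin m, Set.indicator (Q t) (fun _ => (1 : ℝ)) ω‖
        ≤ ∑ t : Fin m × Fin m × Fin m, ‖Set.indicator (Q t) (fun _ => (1 : ℝ)) ω‖ :=
          norm_sum_le _ _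
      _ ≤ ∑ _t : Fin m × Fin m × Fin m, (1 : ℝ) := by
          refine Finset.sum_le_sum (fun t _ => ?_)
          by_cases h : ω ∈ Q t
          · rw [Set.indicator_of_mem h]
            simp
          · rw [Set.indicator_of_notMem h]
            simp
      _ = (Fintype.card (Fin m × Fin m × Fin m) : ℝ) := by
          simp [Finset.sum_const]
  have hmem2 : MemLp (fun ω => ∑ t : Fin m × Fin m × Fin m,
      Set.indicator (Q t) (fun _ => (1 : ℝ)) ω) 2 μ :=
    (memLp_top_of_bound hZmeas.aestronglyMeasurable _
      (Filter.Eventually.of_forall hZbd)).mono_exponent le_top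
  rw [variance_eq_sub hmem2]
  have hprodind : ∀ t s : Fin m × Fin m × Fin m, ∀ ω,
      Set.indicator (Q t) (fun _ => (1 : ℝ)) ω * Set.indicator (Q s) (fun _ => (1 : ℝ)) ω =
      Set.indicator (Q t ∩ Q s) (fun _ => (1 : ℝ)) ω := by
    intro t s ω
    by_cases h1 : ω ∈ Q t <;> by_cases h2 : ω ∈ Q s <;>
      simp [Set.indicator_apply, Set.mem_inter_iff, h1, h2]
  have hsq : ((fun ω => ∑ t : Fin m × Fin m × Fin m,
      Set.indicator (Q t) (fun _ => (1 : ℝ)) ω) ^ 2) =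
      fun ω => ∑ t : Fin m × Fin m × Fin m, ∑ s : Fin m × Fin m × Fin m,
        Set.indicator (Q t ∩ Q s) (fun _ => (1 : ℝ)) ω := by
    funext ω
    simp only [Pi.pow_apply]
    rw [sq, Finset.sum_mul_sum]
    exact Finset.sum_congr rfl (fun t _ => Finset.sum_congr rfl (fun s _ => hprodind t s ω))
  have hint1 : ∀ (A : Set Ω), MeasurableSet A →
      Integrable (Set.indicator A (fun _ => (1 : ℝ))) μ :=
    fun A hA => (integrable_const (1 : ℝ)).indicator hA
  have hintval : ∀ (A : Set Ω), MeasurableSet A →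
      ∫ ω, Set.indicator A (fun _ => (1 : ℝ)) ω ∂μ = (μ A).toReal := by
    intro A hA
    rw [integral_indicator_const (1 : ℝ) hA, smul_eq_mul, mul_one]
    rfl
  have hm2 : (∫ ω, ((fun ω => ∑ t : Fin m × Fin m × Fin m,
      Set.indicator (Q t) (fun _ => (1 : ℝ)) ω) ^ 2) ω ∂μ) =
      ∑ t : Fin m × Fin m × Fin m, ∑ s : Fin m × Fin m × Fin m,
        (μ (Q t ∩ Q s)).toReal := by
    rw [hsq]
    rw [integral_finset_sum _ (fun t _ => integrable_finset_sum _
      (fun s _ => hint1 _ ((hQm t).inter (hQm s))))]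
    refine Finset.sum_congr rfl (fun t _ => ?_)
    rw [integral_finset_sum _ (fun s _ => hint1 _ ((hQm t).inter (hQm s)))]
    exact Finset.sum_congr rfl (fun s _ => hintval _ ((hQm t).inter (hQm s)))
  have hm1 : (∫ ω, (∑ t : Fin m × Fin m × Fin m,
      Set.indicator (Q t) (fun _ => (1 : ℝ)) ω) ∂μ) =
      ∑ t : Fin m × Fin m × Fin m, (μ (Q t)).toReal := by
    rw [integral_finset_sum _ (fun t _ => hint1 _ (hQm t))]
    exact Finset.sum_congr rfl (fun t _ => hintval _ (hQm t))
  rw [hm2, hm1, sq (∑ t : Fin m × Fin m × Fin m, (μ (Q t)).toReal), Finset.sum_mul_sum]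
  rw [← Finset.sum_sub_distrib]
  have hsumsub : ∀ t : Fin m × Fin m × Fin m,
      (∑ s : Fin m × Fin m × Fin m, (μ (Q t ∩ Q s)).toReal) -
      (∑ s : Fin m × Fin m × Fin m, (μ (Q t)).toReal * (μ (Q s)).toReal) =
      ∑ s : Fin m × Fin m × Fin m,
        ((μ (Q t ∩ Q s)).toReal - (μ (Q t)).toReal * (μ (Q s)).toReal) := by
    intro t
    rw [← Finset.sum_sub_distrib]
  refine le_trans (le_of_eq (Finset.sum_congr rfl (fun t _ => hsumsub t))) ?_
  -- nonnegativity facts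
  have hppn : 0 ≤ p * p' := mul_nonneg hp0 hp'0
  have h2an : 0 ≤ p ^ 2 * p' := mul_nonneg (sq_nonneg p) hp'0
  have h2bn : 0 ≤ p * p' ^ 2 := mul_nonneg hp0 (sq_nonneg p')
  have h2n : 0 ≤ p ^ 2 * p' + p * p' ^ 2 := add_nonneg h2an h2bn
  have h1n : 0 ≤ p ^ 2 * p' ^ 2 := mul_nonneg (sq_nonneg p) (sq_nonneg p')
  -- more ENNReal plumbing
  have hne2 : σ {z | ‖z‖ = 1 ∧ |(⟪z, u⟫ : ℝ) - Real.cos θ'| ≤ ε} *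
      ((σ.prod σ) (Pset θ ε) * σ {z | ‖z‖ = 1 ∧ |(⟪z, u⟫ : ℝ) - Real.cos θ'| ≤ ε}) ≠ ⊤ :=
    ENNReal.mul_ne_top hP'ne hPP'ne
  have htrB : (σ {z | ‖z‖ = 1 ∧ |(⟪z, u⟫ : ℝ) - Real.cos θ'| ≤ ε} *
      ((σ.prod σ) (Pset θ ε) * σ {z | ‖z‖ = 1 ∧ |(⟪z, u⟫ : ℝ) - Real.cos θ'| ≤ ε})).toReal =
      p' * (p * p') := by
    rw [ENNReal.toReal_mul, htr1, ← hp'2]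
  have hne3 : (σ.prod σ) (Pset θ ε) *
      ((σ.prod σ) (Pset θ ε) * σ {z | ‖z‖ = 1 ∧ |(⟪z, u⟫ : ℝ) - Real.cos θ'| ≤ ε}) ≠ ⊤ :=
    ENNReal.mul_ne_top hPne hPP'ne
  have htrC : ((σ.prod σ) (Pset θ ε) *
      ((σ.prod σ) (Pset θ ε) * σ {z | ‖z‖ = 1 ∧ |(⟪z, u⟫ : ℝ) - Real.cos θ'| ≤ ε})).toReal =
      p * (p * p') := by
    rw [ENNReal.toReal_mul, htr1, ← hp2]
  have hne4 : ((σ.prod σ) (Pset θ ε) *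
      σ {z | ‖z‖ = 1 ∧ |(⟪z, u⟫ : ℝ) - Real.cos θ'| ≤ ε}) *
      ((σ.prod σ) (Pset θ ε) *
      σ {z | ‖z‖ = 1 ∧ |(⟪z, u⟫ : ℝ) - Real.cos θ'| ≤ ε}) ≠ ⊤ :=
    ENNReal.mul_ne_top hPP'ne hPP'ne
  have htrD : (((σ.prod σ) (Pset θ ε) *
      σ {z | ‖z‖ = 1 ∧ |(⟪z, u⟫ : ℝ) - Real.cos θ'| ≤ ε}) *
      ((σ.prod σ) (Pset θ ε) *
      σ {z | ‖z‖ = 1 ∧ |(⟪z, u⟫ : ℝ) - Real.cos θ'| ≤ ε})).toReal =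
      (p * p') * (p * p') := by
    rw [ENNReal.toReal_mul, htr1]
  -- the per-pair bound
  have hterm : ∀ t s : Fin m × Fin m × Fin m,
      (μ (Q t ∩ Q s)).toReal - (μ (Q t)).toReal * (μ (Q s)).toReal ≤
      (if (s.1 ∈ ({t.1, t.2.1, t.2.2} : Finset (Fin m)) ∧
          s.2.1 ∈ ({t.1, t.2.1, t.2.2} : Finset (Fin m)) ∧
          s.2.2 ∈ ({t.1, t.2.1, t.2.2} : Finset (Fin m))) then p * p' else 0) +
      (if ((s.1 ∈ ({t.1, t.2.1, t.2.2} : Finset (Fin m)) ∧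
            s.2.1 ∈ ({t.1, t.2.1, t.2.2} : Finset (Fin m))) ∨
          (s.1 ∈ ({t.1, t.2.1, t.2.2} : Finset (Fin m)) ∧
            s.2.2 ∈ ({t.1, t.2.1, t.2.2} : Finset (Fin m))) ∨
          (s.2.1 ∈ ({t.1, t.2.1, t.2.2} : Finset (Fin m)) ∧
            s.2.2 ∈ ({t.1, t.2.1, t.2.2} : Finset (Fin m)))) then
        p ^ 2 * p' + p * p' ^ 2 else 0) +
      (if (s.1 ∈ ({t.1, t.2.1, t.2.2} : Finset (Fin m)) ∨
          s.2.1 ∈ ({t.1, t.2.1, t.2.2} : Finset (Fin m)) ∨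
          s.2.2 ∈ ({t.1, t.2.1, t.2.2} : Finset (Fin m))) then p ^ 2 * p' ^ 2 else 0) := by
    intro t s
    have hRHS0 : (0 : ℝ) ≤
        (if (s.1 ∈ ({t.1, t.2.1, t.2.2} : Finset (Fin m)) ∧
            s.2.1 ∈ ({t.1, t.2.1, t.2.2} : Finset (Fin m)) ∧
            s.2.2 ∈ ({t.1, t.2.1, t.2.2} : Finset (Fin m))) then p * p' else 0) +
        (if ((s.1 ∈ ({t.1, t.2.1, t.2.2} : Finset (Fin m)) ∧
              s.2.1 ∈ ({t.1, t.2.1, t.2.2} : Finset (Fin m))) ∨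
            (s.1 ∈ ({t.1, t.2.1, t.2.2} : Finset (Fin m)) ∧
              s.2.2 ∈ ({t.1, t.2.1, t.2.2} : Finset (Fin m))) ∨
            (s.2.1 ∈ ({t.1, t.2.1, t.2.2} : Finset (Fin m)) ∧
              s.2.2 ∈ ({t.1, t.2.1, t.2.2} : Finset (Fin m)))) then
          p ^ 2 * p' + p * p' ^ 2 else 0) +
        (if (s.1 ∈ ({t.1, t.2.1, t.2.2} : Finset (Fin m)) ∨
            s.2.1 ∈ ({t.1, t.2.1, t.2.2} : Finset (Fin m)) ∨
            s.2.2 ∈ ({t.1, t.2.1, t.2.2} : Finset (Fin m))) then p ^ 2 * p' ^ 2 else 0) :=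
      add_nonneg (add_nonneg (iteZero_nonneg hppn) (iteZero_nonneg h2n)) (iteZero_nonneg h1n)
    by_cases hstt : t.1 ≠ t.2.1 ∧ t.1 ≠ t.2.2 ∧ t.2.1 ≠ t.2.2
    swap
    · rw [hQempty t hstt]
      refine le_trans (le_of_eq ?_) hRHS0
      simp
    by_cases hsts : s.1 ≠ s.2.1 ∧ s.1 ≠ s.2.2 ∧ s.2.1 ≠ s.2.2
    swap
    · rw [hQempty s hsts]
      refine le_trans (le_of_eq ?_) hRHS0
      simp
    rw [hQeq t hstt, hQeq s hsts]
    have hsub0 : (μ (Qev θ θ' ε x t ∩ Qev θ θ' ε x s)).toReal -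
        (μ (Qev θ θ' ε x t)).toReal * (μ (Qev θ θ' ε x s)).toReal ≤
        (μ (Qev θ θ' ε x t ∩ Qev θ θ' ε x s)).toReal :=
      sub_le_self _ (mul_nonneg ENNReal.toReal_nonneg ENNReal.toReal_nonneg)
    by_cases hE1 : s.1 ∈ ({t.1, t.2.1, t.2.2} : Finset (Fin m)) <;>
      by_cases hE2 : s.2.1 ∈ ({t.1, t.2.1, t.2.2} : Finset (Fin m)) <;>
      by_cases hE3 : s.2.2 ∈ ({t.1, t.2.1, t.2.2} : Finset (Fin m))
    -- TTT
    · have hb : μ (Qev θ θ' ε x t ∩ Qev θ θ' ε x s) ≤ (σ.prod σ) (Pset θ ε) *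
          σ {z | ‖z‖ = 1 ∧ |(⟪z, u⟫ : ℝ) - Real.cos θ'| ≤ ε} :=
        le_trans (measure_mono Set.inter_subset_left)
          (pat3 σ θ θ' ε u μ x hrot hsph hxm hxd hind hstt.1 hstt.2.1 hstt.2.2 hu)
      have hc := le_trans hsub0 (le_trans (ENNReal.toReal_mono hPP'ne hb) (le_of_eq htr1))
      rw [if_pos ⟨hE1, hE2, hE3⟩, if_pos (Or.inl ⟨hE1, hE2⟩), if_pos (Or.inl hE1)]
      linarith [h2n, h1n]
    -- TTF
    · obtain ⟨hf1, hf2, hf3⟩ := not_mem_triple hE3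
      obtain ⟨g₁, hg₁m, hg₁u, hg₁e⟩ := selector x hE1
      obtain ⟨g₂, hg₂m, hg₂u, hg₂e⟩ := selector x hE2
      have hb : μ (Qev θ θ' ε x t ∩ Qev θ θ' ε x s) ≤
          σ {z | ‖z‖ = 1 ∧ |(⟪z, u⟫ : ℝ) - Real.cos θ'| ≤ ε} *
          ((σ.prod σ) (Pset θ ε) * σ {z | ‖z‖ = 1 ∧ |(⟪z, u⟫ : ℝ) - Real.cos θ'| ≤ ε}) := by
        refine le_trans (measure_mono ?_)
          (pat2a σ θ θ' ε u μ x hrot hsph hxm hxd hind hstt.1 hstt.2.1 hstt.2.2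
            hf1 hf2 hf3 hu hg₁m hg₂m hg₁e hg₂e)
        exact fun ω hω => ⟨hω.1, hω.2.1, hω.2.2.2⟩
      have hc := le_trans hsub0 (le_trans (ENNReal.toReal_mono hne2 hb) (le_of_eq htrB))
      rw [if_neg (fun h => hE3 h.2.2), if_pos (Or.inl ⟨hE1, hE2⟩), if_pos (Or.inl hE1)]
      have he : p' * (p * p') = p * p' ^ 2 := by ring
      linarith [h2an, h1n]
    -- TFT
    · obtain ⟨hf1, hf2, hf3⟩ := not_mem_triple hE2
      obtain ⟨g₁, hg₁m, hg₁u, hg₁e⟩ := selector x hE1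
      have hb : μ (Qev θ θ' ε x t ∩ Qev θ θ' ε x s) ≤
          (σ.prod σ) (Pset θ ε) *
          ((σ.prod σ) (Pset θ ε) * σ {z | ‖z‖ = 1 ∧ |(⟪z, u⟫ : ℝ) - Real.cos θ'| ≤ ε}) := by
        refine le_trans (measure_mono ?_)
          (pat2c σ θ θ' ε u μ x hrot hsph hxm hxd hind hstt.1 hstt.2.1 hstt.2.2
            hf1 hf2 hf3 hu hg₁m hg₁u hg₁e)
        exact fun ω hω => ⟨hω.1, hω.2.2.1⟩
      have hc := le_trans hsub0 (le_trans (ENNReal.toReal_mono hne3 hb) (le_of_eq htrC))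
      rw [if_neg (fun h => hE2 h.2.1), if_pos (Or.inr (Or.inl ⟨hE1, hE3⟩)),
        if_pos (Or.inl hE1)]
      have he : p * (p * p') = p ^ 2 * p' := by ring
      linarith [h2bn, h1n]
    -- TFF
    · obtain ⟨hf11, hf12, hf13⟩ := not_mem_triple hE2
      obtain ⟨hf21, hf22, hf23⟩ := not_mem_triple hE3
      obtain ⟨g₁, hg₁m, hg₁u, hg₁e⟩ := selector x hE1
      have hb : μ (Qev θ θ' ε x t ∩ Qev θ θ' ε x s) ≤
          ((σ.prod σ) (Pset θ ε) * σ {z | ‖z‖ = 1 ∧ |(⟪z, u⟫ : ℝ) - Real.cos θ'| ≤ ε}) *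
          ((σ.prod σ) (Pset θ ε) * σ {z | ‖z‖ = 1 ∧ |(⟪z, u⟫ : ℝ) - Real.cos θ'| ≤ ε}) := by
        refine le_trans (measure_mono ?_)
          (pat1a σ θ θ' ε u μ x hrot hsph hxm hxd hind hstt.1 hstt.2.1 hstt.2.2
            hf11 hf12 hf13 hf21 hf22 hf23 hsts.2.2 hu hg₁m hg₁u hg₁e)
        exact fun ω hω => ⟨hω.1, hω.2.1, hω.2.2.1, hω.2.2.2⟩
      have hc := le_trans hsub0 (le_trans (ENNReal.toReal_mono hne4 hb) (le_of_eq htrD))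
      rw [if_neg (fun h => hE2 h.2.1), if_neg ?_, if_pos (Or.inl hE1)]
      rotate_left
      · rintro (⟨h, h'⟩ | ⟨h, h'⟩ | ⟨h, h'⟩)
        · exact hE2 h'
        · exact hE3 h'
        · exact hE2 h
      have he : (p * p') * (p * p') = p ^ 2 * p' ^ 2 := by ring
      linarith [hppn]
    -- FTT
    · obtain ⟨hf1, hf2, hf3⟩ := not_mem_triple hE1
      obtain ⟨g₁, hg₁m, hg₁u, hg₁e⟩ := selector x hE2
      have hb : μ (Qev θ θ' ε x t ∩ Qev θ θ' ε x s) ≤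
          (σ.prod σ) (Pset θ ε) *
          ((σ.prod σ) (Pset θ ε) * σ {z | ‖z‖ = 1 ∧ |(⟪z, u⟫ : ℝ) - Real.cos θ'| ≤ ε}) := by
        refine le_trans (measure_mono ?_)
          (pat2b σ θ θ' ε u μ x hrot hsph hxm hxd hind hstt.1 hstt.2.1 hstt.2.2
            hf1 hf2 hf3 hu hg₁m hg₁u hg₁e)
        exact fun ω hω => ⟨hω.1, hω.2.2.1⟩
      have hc := le_trans hsub0 (le_trans (ENNReal.toReal_mono hne3 hb) (le_of_eq htrC))
      rw [if_neg (fun h => hE1 h.1), if_pos (Or.inr (Or.inr ⟨hE2, hE3⟩)),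
        if_pos (Or.inr (Or.inl hE2))]
      have he : p * (p * p') = p ^ 2 * p' := by ring
      linarith [h2bn, h1n]
    -- FTF
    · obtain ⟨hf11, hf12, hf13⟩ := not_mem_triple hE1
      obtain ⟨hf21, hf22, hf23⟩ := not_mem_triple hE3
      obtain ⟨g₁, hg₁m, hg₁u, hg₁e⟩ := selector x hE2
      have hb : μ (Qev θ θ' ε x t ∩ Qev θ θ' ε x s) ≤
          ((σ.prod σ) (Pset θ ε) * σ {z | ‖z‖ = 1 ∧ |(⟪z, u⟫ : ℝ) - Real.cos θ'| ≤ ε}) *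
          ((σ.prod σ) (Pset θ ε) * σ {z | ‖z‖ = 1 ∧ |(⟪z, u⟫ : ℝ) - Real.cos θ'| ≤ ε}) := by
        refine le_trans (measure_mono ?_)
          (pat1b σ θ θ' ε u μ x hrot hsph hxm hxd hind hstt.1 hstt.2.1 hstt.2.2
            hf11 hf12 hf13 hf21 hf22 hf23 hsts.2.1 hu hg₁m hg₁u hg₁e)
        exact fun ω hω => ⟨hω.1, hω.2.1, hω.2.2.1, hω.2.2.2⟩
      have hc := le_trans hsub0 (le_trans (ENNReal.toReal_mono hne4 hb) (le_of_eq htrD))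
      rw [if_neg (fun h => hE1 h.1), if_neg ?_, if_pos (Or.inr (Or.inl hE2))]
      rotate_left
      · rintro (⟨h, h'⟩ | ⟨h, h'⟩ | ⟨h, h'⟩)
        · exact hE1 h
        · exact hE1 h
        · exact hE3 h'
      have he : (p * p') * (p * p') = p ^ 2 * p' ^ 2 := by ring
      linarith [hppn]
    -- FFT
    · obtain ⟨hf11, hf12, hf13⟩ := not_mem_triple hE1
      obtain ⟨hf21, hf22, hf23⟩ := not_mem_triple hE2
      obtain ⟨g₁, hg₁m, hg₁u, hg₁e⟩ := selector x hE3
      have hb : μ (Qev θ θ' ε x t ∩ Qev θ θ' ε x s) ≤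
          ((σ.prod σ) (Pset θ ε) * σ {z | ‖z‖ = 1 ∧ |(⟪z, u⟫ : ℝ) - Real.cos θ'| ≤ ε}) *
          ((σ.prod σ) (Pset θ ε) * σ {z | ‖z‖ = 1 ∧ |(⟪z, u⟫ : ℝ) - Real.cos θ'| ≤ ε}) := by
        refine le_trans (measure_mono ?_)
          (pat1c σ θ θ' ε u μ x hrot hsph hxm hxd hind hstt.1 hstt.2.1 hstt.2.2
            hf11 hf12 hf13 hf21 hf22 hf23 hsts.1 hu hg₁m hg₁u hg₁e)
        exact fun ω hω => ⟨hω.1, hω.2.1, hω.2.2.1, hω.2.2.2⟩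
      have hc := le_trans hsub0 (le_trans (ENNReal.toReal_mono hne4 hb) (le_of_eq htrD))
      rw [if_neg (fun h => hE1 h.1), if_neg ?_, if_pos (Or.inr (Or.inr hE3))]
      rotate_left
      · rintro (⟨h, h'⟩ | ⟨h, h'⟩ | ⟨h, h'⟩)
        · exact hE1 h
        · exact hE1 h
        · exact hE2 h
      have he : (p * p') * (p * p') = p ^ 2 * p' ^ 2 := by ring
      linarith [hppn]
    -- FFF
    · have h0 := indep_zero θ θ' ε μ x hxm hind (t := t) (s := s) hE1 hE2 hE3
      rw [if_neg (fun h => hE1 h.1), if_neg ?_, if_neg ?_]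
      rotate_left
      · rintro (h | h | h)
        · exact hE1 h
        · exact hE2 h
        · exact hE3 h
      · rintro (⟨h, h'⟩ | ⟨h, h'⟩ | ⟨h, h'⟩)
        · exact hE1 h
        · exact hE1 h
        · exact hE2 h
      rw [h0, ENNReal.toReal_mul]
      simp
  -- sum the bounds
  have hprodsum : ∀ F : (Fin m × Fin m × Fin m) → (Fin m × Fin m × Fin m) → ℝ,
      ∑ q : (Fin m × Fin m × Fin m) × (Fin m × Fin m × Fin m), F q.1 q.2 =
      ∑ t : Fin m × Fin m × Fin m, ∑ s : Fin m × Fin m × Fin m, F t s := by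
    intro F
    rw [← Finset.univ_product_univ, Finset.sum_product]
  rw [← hprodsum]
  refine le_trans (Finset.sum_le_sum (fun q _ => hterm q.1 q.2)) ?_
  rw [Finset.sum_add_distrib, Finset.sum_add_distrib]
  have hS3 := sum_ite_const_le
    (fun q : (Fin m × Fin m × Fin m) × (Fin m × Fin m × Fin m) =>
      q.2.1 ∈ ({q.1.1, q.1.2.1, q.1.2.2} : Finset (Fin m)) ∧
      q.2.2.1 ∈ ({q.1.1, q.1.2.1, q.1.2.2} : Finset (Fin m)) ∧
      q.2.2.2 ∈ ({q.1.1, q.1.2.1, q.1.2.2} : Finset (Fin m)))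
    (p * p') hppn (27 * m ^ 3) count3
  have hS2 := sum_ite_const_le
    (fun q : (Fin m × Fin m × Fin m) × (Fin m × Fin m × Fin m) =>
      (q.2.1 ∈ ({q.1.1, q.1.2.1, q.1.2.2} : Finset (Fin m)) ∧
        q.2.2.1 ∈ ({q.1.1, q.1.2.1, q.1.2.2} : Finset (Fin m))) ∨
      (q.2.1 ∈ ({q.1.1, q.1.2.1, q.1.2.2} : Finset (Fin m)) ∧
        q.2.2.2 ∈ ({q.1.1, q.1.2.1, q.1.2.2} : Finset (Fin m))) ∨
      (q.2.2.1 ∈ ({q.1.1, q.1.2.1, q.1.2.2} : Finset (Fin m)) ∧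
        q.2.2.2 ∈ ({q.1.1, q.1.2.1, q.1.2.2} : Finset (Fin m))))
    (p ^ 2 * p' + p * p' ^ 2) h2n (27 * m ^ 4) count2
  have hS1 := sum_ite_const_le
    (fun q : (Fin m × Fin m × Fin m) × (Fin m × Fin m × Fin m) =>
      q.2.1 ∈ ({q.1.1, q.1.2.1, q.1.2.2} : Finset (Fin m)) ∨
      q.2.2.1 ∈ ({q.1.1, q.1.2.1, q.1.2.2} : Finset (Fin m)) ∨
      q.2.2.2 ∈ ({q.1.1, q.1.2.1, q.1.2.2} : Finset (Fin m)))
    (p ^ 2 * p' ^ 2) h1n (27 * m ^ 5) count1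
  refine le_trans (add_le_add (add_le_add hS3 hS2) hS1) ?_
  have hcast : ∀ k : ℕ, ((27 * m ^ k : ℕ) : ℝ) = 27 * (m : ℝ) ^ k := by
    intro k
    push_cast
    ring
  rw [hcast 3, hcast 4, hcast 5]
  have : 27 * (m : ℝ) ^ 3 * (p * p') + 27 * (m : ℝ) ^ 4 * (p ^ 2 * p' + p * p' ^ 2) +
      27 * (m : ℝ) ^ 5 * (p ^ 2 * p' ^ 2) =
      27 * ((m : ℝ) ^ 3 * p * p' + (m : ℝ) ^ 4 * p ^ 2 * p' +
        (m : ℝ) ^ 4 * p * p' ^ 2 + (m : ℝ) ^ 5 * p ^ 2 * p' ^ 2) := by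
    ring
  linarith [this]
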